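/- arXiv:1510.01073 — 17 statements merged into one kernel-verified Lean document; each statement's English description precedes it below -/
import Mathlib

section
/- The Jacobi–Davidson correction equation (I - u u^H)(A - λ̃ I)(I - u u^H) v = -r, subject to the constraint u^H v = 0, has exactly one solution v if and only if u^H (A - λ̃ I)^{-1} u ≠ 0. -/
open Matrix

lemma fin1_eq_smul_one (M : Matrix (Fin 1) (Fin 1) ℂ) :
    M = M 0 0 • (1 : Matrix (Fin 1) (Fin 1) ℂ) := by
  ext i j
  fin_cases i; fin_cases j
  simp

/-- The Jacobi–Davidson correction equation
`(I - u uᴴ)(A - λ̃ I)(I - u uᴴ) v = -r`, subject to `uᴴ v = 0`,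
has exactly one solution `v` iff `uᴴ (A - λ̃ I)⁻¹ u ≠ 0`. -/
theorem jd_correction_unique_solution_iff
    {n : ℕ} (A : Matrix (Fin n) (Fin n) ℂ) (lam : ℂ)
    (hA : IsUnit (A - lam • (1 : Matrix (Fin n) (Fin n) ℂ)))
    (u : Matrix (Fin n) (Fin 1) ℂ)
    (hu : uᴴ * u = 1)
    (hlam : (uᴴ * A * u) 0 0 = lam)
    (r : Matrix (Fin n) (Fin 1) ℂ)
    (hr : r = (A - lam • 1) * u) :
    (∃! v : Matrix (Fin n) (Fin 1) ℂ,
        uᴴ * v = 0 ∧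
          (1 - u * uᴴ) * (A - lam • 1) * (1 - u * uᴴ) * v = -r) ↔
      (uᴴ * (A - lam • (1 : Matrix (Fin n) (Fin n) ℂ))⁻¹ * u) 0 0 ≠ 0 := by
  set B := A - lam • (1 : Matrix (Fin n) (Fin n) ℂ) with hBdef
  have hd : IsUnit B.det := (Matrix.isUnit_iff_isUnit_det B).mp hA
  have hB1 : B * B⁻¹ = 1 := Matrix.mul_nonsing_inv B hd
  have hB2 : B⁻¹ * B = 1 := Matrix.nonsing_inv_mul B hd
  have hAu : uᴴ * A * u = lam • 1 := by
    rw [fin1_eq_smul_one (uᴴ * A * u), hlam]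
  have hBu0 : uᴴ * B * u = 0 := by
    have h1 : uᴴ * B * u = uᴴ * A * u - lam • (uᴴ * u) := by
      simp [hBdef, Matrix.mul_sub, Matrix.sub_mul, Matrix.mul_smul,
        Matrix.smul_mul, Matrix.mul_one]
    rw [h1, hAu, hu]; simp
  set α : ℂ := (uᴴ * B⁻¹ * u) 0 0 with hα
  have hαmat : uᴴ * B⁻¹ * u = α • 1 := fin1_eq_smul_one _
  have hune : u ≠ 0 := by
    intro h
    have h01 := congrFun (congrFun hu 0) 0
    simp [h, Matrix.one_apply] at h01
  set w : Matrix (Fin n) (Fin 1) ℂ := B⁻¹ * u with hwdef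
  have hBw : B * w = u := by
    rw [hwdef, ← Matrix.mul_assoc, hB1, Matrix.one_mul]
  have huw : uᴴ * w = α • 1 := by
    rw [hwdef, ← Matrix.mul_assoc, hαmat]
  set P : Matrix (Fin n) (Fin n) ℂ := 1 - u * uᴴ with hPdef
  have hPu : P * u = 0 := by
    rw [hPdef, Matrix.sub_mul, Matrix.one_mul, Matrix.mul_assoc, hu,
      Matrix.mul_one, sub_self]
  have hPfix : ∀ x : Matrix (Fin n) (Fin 1) ℂ, uᴴ * x = 0 → P * x = x := by
    intro x hx
    rw [hPdef, Matrix.sub_mul, Matrix.one_mul, Matrix.mul_assoc, hx,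
      Matrix.mul_zero, sub_zero]
  have hkey : ∀ x : Matrix (Fin n) (Fin 1) ℂ, uᴴ * x = 0 →
      P * B * P * x = B * x - u * (uᴴ * (B * x)) := by
    intro x hx
    rw [Matrix.mul_assoc (P * B) P x, hPfix x hx, Matrix.mul_assoc P B x,
      hPdef, Matrix.sub_mul, Matrix.one_mul, Matrix.mul_assoc]
  constructor
  · rintro ⟨v, ⟨hv1, hv2⟩, huniq⟩ hα0
    -- with α = 0, v + w is also a solution, contradiction
    have huw0 : uᴴ * w = 0 := by rw [huw, hα0, zero_smul]
    have hvw1 : uᴴ * (v + w) = 0 := by rw [Matrix.mul_add, hv1, huw0, add_zero]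
    have hPBPw : P * B * P * w = 0 := by
      rw [hkey w huw0, hBw, ← Matrix.mul_assoc, Matrix.mul_assoc u uᴴ u, hu,
        Matrix.mul_one, sub_self]
    have hvw2 : P * B * P * (v + w) = -r := by
      rw [Matrix.mul_add, hPBPw, add_zero, hv2]
    have heq : v + w = v := huniq (v + w) ⟨hvw1, hvw2⟩
    have hw0 : w = 0 := by
      have h6 : v + w = v + 0 := by rw [heq, add_zero]
      exact add_left_cancel h6
    have : u = 0 := by rw [← hBw, hw0, Matrix.mul_zero]
    exact hune this
  · intro hα0
    refine ⟨α⁻¹ • w - u, ⟨?_, ?_⟩, ?_⟩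
    · rw [Matrix.mul_sub, Matrix.mul_smul, huw, hu, smul_smul,
        inv_mul_cancel₀ hα0, one_smul, sub_self]
    · have hv1 : uᴴ * (α⁻¹ • w - u) = 0 := by
        rw [Matrix.mul_sub, Matrix.mul_smul, huw, hu, smul_smul,
          inv_mul_cancel₀ hα0, one_smul, sub_self]
      rw [hkey _ hv1]
      rw [Matrix.mul_sub, Matrix.mul_smul, hBw]
      have h2 : uᴴ * (α⁻¹ • u - B * u) = α⁻¹ • 1 := by
        rw [Matrix.mul_sub, Matrix.mul_smul, hu, ← Matrix.mul_assoc, hBu0,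
          sub_zero]
      rw [h2, Matrix.mul_smul, Matrix.mul_one, hr]
      abel
    · rintro v' ⟨hv'1, hv'2⟩
      rw [hkey v' hv'1] at hv'2
      -- B * v' = u * (uᴴ * (B * v')) - B * u
      have hBv' : B * v' = u * (uᴴ * (B * v')) - B * u := by
        have := hv'2
        rw [hr] at this
        linear_combination (norm := abel) this
      set s : ℂ := (uᴴ * (B * v')) 0 0 with hs
      have hsmat : uᴴ * (B * v') = s • 1 := fin1_eq_smul_one _
      have hv'eq : v' = s • w - u := by
        have h3 : v' = B⁻¹ * (B * v') := by
          rw [← Matrix.mul_assoc, hB2, Matrix.one_mul]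
        rw [h3, hBv', hsmat, Matrix.mul_smul, Matrix.mul_one,
          Matrix.mul_sub, Matrix.mul_smul, ← Matrix.mul_assoc, hB2,
          Matrix.one_mul, ← hwdef]
      have hsα : s * α = 1 := by
        have h4 : uᴴ * v' = (s * α) • 1 - 1 := by
          rw [hv'eq, Matrix.mul_sub, Matrix.mul_smul, huw, hu, smul_smul]
        rw [hv'1] at h4
        have h5 := congrFun (congrFun h4 0) 0
        simp [Matrix.one_apply, Matrix.smul_apply] at h5
        linear_combination -h5
      have hseq : s = α⁻¹ := by
        field_simp
        linear_combination hsα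
      rw [hv'eq, hseq]
end

section
/- The Jacobi–Davidson correction equation (I - u u^H)(A - λ̃ I)(I - u u^H) v = -r, subject to the constraint u^H v = 0, has no solution v if and only if u^H (A - λ̃ I)^{-1} u = 0. -/
open Matrix

lemma jd_one_by_one (M : Matrix (Fin 1) (Fin 1) ℂ) : M = (M 0 0) • 1 := by
  ext i j
  fin_cases i; fin_cases j; simp

/-- The Jacobi–Davidson correction equation
`(I - u uᴴ)(A - λ̃ I)(I - u uᴴ) v = -r`, subject to `uᴴ v = 0`,
has no solution `v` iff `uᴴ (A - λ̃ I)⁻¹ u = 0`. -/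
theorem jd_correction_no_solution_iff
    {n : ℕ} (A : Matrix (Fin n) (Fin n) ℂ) (lam : ℂ)
    (hA : IsUnit (A - lam • (1 : Matrix (Fin n) (Fin n) ℂ)))
    (u : Matrix (Fin n) (Fin 1) ℂ)
    (hu : uᴴ * u = 1)
    (hlam : (uᴴ * A * u) 0 0 = lam)
    (r : Matrix (Fin n) (Fin 1) ℂ)
    (hr : r = (A - lam • 1) * u) :
    (¬ ∃ v : Matrix (Fin n) (Fin 1) ℂ,
        uᴴ * v = 0 ∧
          (1 - u * uᴴ) * (A - lam • 1) * (1 - u * uᴴ) * v = -r) ↔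
      (uᴴ * (A - lam • (1 : Matrix (Fin n) (Fin n) ℂ))⁻¹ * u) 0 0 = 0 := by
  set B := A - lam • (1 : Matrix (Fin n) (Fin n) ℂ) with hB
  have hdet : IsUnit B.det := (Matrix.isUnit_iff_isUnit_det B).mp hA
  have hBi1 : ∀ w : Matrix (Fin n) (Fin 1) ℂ, B * (B⁻¹ * w) = w := by
    intro w
    rw [← Matrix.mul_assoc, Matrix.mul_nonsing_inv B hdet, Matrix.one_mul]
  have hBi2 : ∀ w : Matrix (Fin n) (Fin 1) ℂ, B⁻¹ * (B * w) = w := by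
    intro w
    rw [← Matrix.mul_assoc, Matrix.nonsing_inv_mul B hdet, Matrix.one_mul]
  have hAu : uᴴ * A * u = lam • 1 := by
    rw [jd_one_by_one (uᴴ * A * u), hlam]
  have hur : uᴴ * r = 0 := by
    rw [hr, hB, Matrix.sub_mul, Matrix.mul_sub, ← Matrix.mul_assoc, hAu,
      Matrix.smul_mul, Matrix.one_mul, Matrix.mul_smul, hu]
    simp
  have hBir : B⁻¹ * r = u := by rw [hr]; exact hBi2 u
  set s : ℂ := (uᴴ * B⁻¹ * u) 0 0 with hs
  have hsu : uᴴ * (B⁻¹ * u) = s • 1 := by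
    rw [← Matrix.mul_assoc]; exact jd_one_by_one _
  have hru : B * u = r := hr.symm
  constructor
  · intro hno
    by_contra hs0
    apply hno
    set v : Matrix (Fin n) (Fin 1) ℂ := -u + s⁻¹ • (B⁻¹ * u) with hv
    have hv1 : uᴴ * v = 0 := by
      rw [hv, Matrix.mul_add, Matrix.mul_neg, hu, Matrix.mul_smul, hsu, smul_smul,
        inv_mul_cancel₀ hs0, one_smul, neg_add_cancel]
    refine ⟨v, hv1, ?_⟩
    have hPv : (1 - u * uᴴ) * v = v := by
      rw [Matrix.sub_mul, Matrix.one_mul, Matrix.mul_assoc, hv1, Matrix.mul_zero,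
        sub_zero]
    have hBv : B * v = -r + s⁻¹ • u := by
      rw [hv, Matrix.mul_add, Matrix.mul_neg, hru, Matrix.mul_smul, hBi1]
    rw [Matrix.mul_assoc ((1 - u * uᴴ) * B), hPv, Matrix.mul_assoc, hBv,
      Matrix.sub_mul, Matrix.one_mul]
    simp [hur, Matrix.mul_smul, Matrix.mul_assoc, hu, Matrix.mul_add]
  · rintro hs0 ⟨v, hv1, hv2⟩
    have hPv : (1 - u * uᴴ) * v = v := by
      rw [Matrix.sub_mul, Matrix.one_mul, Matrix.mul_assoc, hv1, Matrix.mul_zero,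
        sub_zero]
    rw [Matrix.mul_assoc ((1 - u * uᴴ) * B), hPv, Matrix.mul_assoc,
      Matrix.sub_mul, Matrix.one_mul] at hv2
    have h : uᴴ * (B⁻¹ * (B * v - u * uᴴ * (B * v))) = uᴴ * (B⁻¹ * (-r)) := by
      rw [hv2]
    have hsu2 : uᴴ * B⁻¹ * u = 0 := by
      rw [jd_one_by_one (uᴴ * B⁻¹ * u), ← hs, hs0, zero_smul]
    rw [Matrix.mul_sub, hBi2, Matrix.mul_sub, hv1, Matrix.mul_assoc u uᴴ,
      ← Matrix.mul_assoc B⁻¹, ← Matrix.mul_assoc uᴴ, hsu, hs0, zero_smul,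
      Matrix.zero_mul, sub_zero, Matrix.mul_neg, hBir, Matrix.mul_neg, hu] at h
    have h00 := congrFun (congrFun h 0) 0
    simp at h00
end

section
/- The alternative correction equation (I - W W^H)(A - λ̃ I)(I - W W^H) v = -r, subject to the constraint W^H v = 0, has exactly one solution v if and only if the m×m matrix W^H (A - λ̃ I)^{-1} W is invertible. -/
open Matrix

/-- The alternative correction equation
`(I - W Wᴴ)(A - λ̃ I)(I - W Wᴴ) v = -r`, subject to `Wᴴ v = 0`,
has exactly one solution `v` iff `Wᴴ (A - λ̃ I)⁻¹ W` is invertible. -/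
theorem alt_correction_unique_solution_iff
    {n m : ℕ} (hm : m ≤ n)
    (A : Matrix (Fin n) (Fin n) ℂ) (lam : ℂ)
    (hA : IsUnit (A - lam • (1 : Matrix (Fin n) (Fin n) ℂ)))
    (W : Matrix (Fin n) (Fin m) ℂ) (hW : Wᴴ * W = 1)
    (u : Matrix (Fin n) (Fin 1) ℂ)
    (huW : ∃ c : Matrix (Fin m) (Fin 1) ℂ, u = W * c)
    (hu : uᴴ * u = 1)
    (hlam : (uᴴ * A * u) 0 0 = lam)
    (r : Matrix (Fin n) (Fin 1) ℂ)
    (hr : r = (A - lam • 1) * u)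
    (hWr : Wᴴ * r = 0) :
    (∃! v : Matrix (Fin n) (Fin 1) ℂ,
        Wᴴ * v = 0 ∧
          (1 - W * Wᴴ) * (A - lam • 1) * (1 - W * Wᴴ) * v = -r) ↔
      IsUnit (Wᴴ * (A - lam • (1 : Matrix (Fin n) (Fin n) ℂ))⁻¹ * W) := by
  obtain ⟨c, hc⟩ := huW
  set B := A - lam • (1 : Matrix (Fin n) (Fin n) ℂ) with hBdef
  have hdet : IsUnit B.det := (Matrix.isUnit_iff_isUnit_det B).mp hA
  have hB1 : B * B⁻¹ = 1 := Matrix.mul_nonsing_inv B hdet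
  have hB2 : B⁻¹ * B = 1 := Matrix.nonsing_inv_mul B hdet
  set S := Wᴴ * B⁻¹ * W with hSdef
  have hWu : Wᴴ * u = c := by rw [hc, ← Matrix.mul_assoc, hW, Matrix.one_mul]
  -- key reformulation of the equation, assuming the constraint
  have key : ∀ v : Matrix (Fin n) (Fin 1) ℂ, Wᴴ * v = 0 →
      ((1 - W * Wᴴ) * B * (1 - W * Wᴴ) * v = -r ↔
        ∃ t : Matrix (Fin m) (Fin 1) ℂ, B * v = -r + W * t) := by
    intro v hv
    have hPv : (1 - W * Wᴴ) * v = v := by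
      rw [Matrix.sub_mul, Matrix.one_mul, Matrix.mul_assoc, hv, Matrix.mul_zero, sub_zero]
    have hLHS : (1 - W * Wᴴ) * B * (1 - W * Wᴴ) * v
        = B * v - W * (Wᴴ * (B * v)) := by
      rw [Matrix.mul_assoc ((1 - W * Wᴴ) * B), hPv]
      simp only [Matrix.sub_mul, Matrix.one_mul, Matrix.mul_assoc]
    rw [hLHS]
    constructor
    · intro h
      exact ⟨Wᴴ * (B * v), by rw [← h]; abel⟩
    · rintro ⟨t, ht⟩
      rw [ht]
      simp only [Matrix.mul_add, Matrix.mul_neg, hWr, ← Matrix.mul_assoc, hW,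
        Matrix.one_mul, neg_zero, zero_add, Matrix.mul_zero]
      abel
  have hfold : ∀ x : Matrix (Fin m) (Fin 1) ℂ, Wᴴ * (B⁻¹ * (W * x)) = S * x := by
    intro x; rw [hSdef]; simp only [Matrix.mul_assoc]
  constructor
  · rintro ⟨v, ⟨hv0, hveq⟩, huniq⟩
    -- injectivity of S
    have hinj : ∀ x : Matrix (Fin m) (Fin 1) ℂ, S * x = 0 → x = 0 := by
      intro x hx
      obtain ⟨t₀, ht₀⟩ := (key v hv0).mp hveq
      have hv'0 : Wᴴ * (v + B⁻¹ * (W * x)) = 0 := by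
        rw [Matrix.mul_add, hv0, hfold, hx, add_zero]
      have hv'eq : (1 - W * Wᴴ) * B * (1 - W * Wᴴ) * (v + B⁻¹ * (W * x)) = -r := by
        refine (key _ hv'0).mpr ⟨t₀ + x, ?_⟩
        rw [Matrix.mul_add, ht₀, ← Matrix.mul_assoc, hB1, Matrix.one_mul, Matrix.mul_add]
        abel
      have : v + B⁻¹ * (W * x) = v := huniq _ ⟨hv'0, hv'eq⟩
      have h0 : B⁻¹ * (W * x) = 0 := by
        have := congrArg (· - v) this
        simpa [add_comm, add_sub_cancel_right] using this
      have hWx : W * x = 0 := by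
        have := congrArg (fun M => B * M) h0
        simpa [← Matrix.mul_assoc, hB1] using this
      have := congrArg (fun M => Wᴴ * M) hWx
      simpa [← Matrix.mul_assoc, hW] using this
    -- injectivity implies invertibility over ℂ
    rw [Matrix.isUnit_iff_isUnit_det, isUnit_iff_ne_zero]
    intro hdS
    obtain ⟨k, hk, hSk⟩ := (Matrix.exists_mulVec_eq_zero_iff).mpr hdS
    have : (fun i _ => k i : Matrix (Fin m) (Fin 1) ℂ) = 0 := by
      apply hinj
      ext i j
      have := congrFun hSk i
      show ∑ x, S i x * k x = 0
      simpa [Matrix.mul_apply, Matrix.mulVec, dotProduct] using this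
    apply hk
    funext i
    exact congrFun (congrFun this i) 0
  · intro hS
    have hdS : IsUnit S.det := (Matrix.isUnit_iff_isUnit_det S).mp hS
    have hS1 : S * S⁻¹ = 1 := Matrix.mul_nonsing_inv S hdS
    have hS2 : S⁻¹ * S = 1 := Matrix.nonsing_inv_mul S hdS
    refine ⟨B⁻¹ * (W * (S⁻¹ * c)) - u, ⟨?_, ?_⟩, ?_⟩
    · rw [Matrix.mul_sub, hWu, hfold, ← Matrix.mul_assoc, hS1, Matrix.one_mul, sub_self]
    · refine (key _ ?_).mpr ⟨S⁻¹ * c, ?_⟩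
      · rw [Matrix.mul_sub, hWu, hfold, ← Matrix.mul_assoc, hS1, Matrix.one_mul, sub_self]
      · rw [Matrix.mul_sub, ← Matrix.mul_assoc, hB1, Matrix.one_mul, ← hr]
        abel
    · rintro y ⟨hy0, hyeq⟩
      obtain ⟨t, ht⟩ := (key y hy0).mp hyeq
      have hy : y = B⁻¹ * (W * t) - u := by
        have := congrArg (fun M => B⁻¹ * M) ht
        simp only [← Matrix.mul_assoc, hB2, Matrix.one_mul, Matrix.mul_add,
          Matrix.mul_neg] at this
        rw [Matrix.mul_assoc] at this
        rw [this, hr, ← Matrix.mul_assoc, hB2, Matrix.one_mul]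
        abel
      have hSt : S * t = c := by
        have := hy0
        rw [hy, Matrix.mul_sub, hWu, hfold, sub_eq_zero] at this
        exact this
      have hts : t = S⁻¹ * c := by
        rw [← hSt, ← Matrix.mul_assoc, hS2, Matrix.one_mul]
      rw [hy, hts]
end

section
/- The alternative correction equation (I - W W^H)(A - λ̃ I)(I - W W^H) v = -r, subject to the constraint W^H v = 0, has no solution v if and only if the m×m matrix M = W^H (A - λ̃ I)^{-1} W is singular and the vector z = W^H u does not lie in the column space (range) of M. -/
open Matrix

/-- The alternative correction equation
`(I - W Wᴴ)(A - λ̃ I)(I - W Wᴴ) v = -r`, subject to `Wᴴ v = 0`,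
has no solution `v` iff `M = Wᴴ (A - λ̃ I)⁻¹ W` is singular and
`z = Wᴴ u` is not in the column space of `M`. -/
theorem alt_correction_no_solution_iff
    {n m : ℕ} (hm : m ≤ n)
    (A : Matrix (Fin n) (Fin n) ℂ) (lam : ℂ)
    (hA : IsUnit (A - lam • (1 : Matrix (Fin n) (Fin n) ℂ)))
    (W : Matrix (Fin n) (Fin m) ℂ) (hW : Wᴴ * W = 1)
    (u : Matrix (Fin n) (Fin 1) ℂ)
    (huW : ∃ c : Matrix (Fin m) (Fin 1) ℂ, u = W * c)
    (hu : uᴴ * u = 1)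
    (hlam : (uᴴ * A * u) 0 0 = lam)
    (r : Matrix (Fin n) (Fin 1) ℂ)
    (hr : r = (A - lam • 1) * u)
    (hWr : Wᴴ * r = 0)
    (M : Matrix (Fin m) (Fin m) ℂ)
    (hM : M = Wᴴ * (A - lam • (1 : Matrix (Fin n) (Fin n) ℂ))⁻¹ * W) :
    (¬ ∃ v : Matrix (Fin n) (Fin 1) ℂ,
        Wᴴ * v = 0 ∧
          (1 - W * Wᴴ) * (A - lam • 1) * (1 - W * Wᴴ) * v = -r) ↔
      (¬ IsUnit M ∧ ¬ ∃ c : Matrix (Fin m) (Fin 1) ℂ, Wᴴ * u = M * c) := by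
  set B := A - lam • (1 : Matrix (Fin n) (Fin n) ℂ) with hB
  have hdet : IsUnit B.det := (Matrix.isUnit_iff_isUnit_det B).mp hA
  have hBinv : B * B⁻¹ = 1 := Matrix.mul_nonsing_inv B hdet
  have hinvB : B⁻¹ * B = 1 := Matrix.nonsing_inv_mul B hdet
  have hBu : B⁻¹ * r = u := by
    rw [hr, ← Matrix.mul_assoc, hinvB, Matrix.one_mul]
  have hP : ∀ x : Matrix (Fin n) (Fin 1) ℂ, Wᴴ * x = 0 → (1 - W * Wᴴ) * x = x := by
    intro x hx
    rw [Matrix.sub_mul, Matrix.one_mul, Matrix.mul_assoc, hx, Matrix.mul_zero, sub_zero]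
  have key : (∃ v : Matrix (Fin n) (Fin 1) ℂ,
        Wᴴ * v = 0 ∧ (1 - W * Wᴴ) * B * (1 - W * Wᴴ) * v = -r) ↔
      (∃ c : Matrix (Fin m) (Fin 1) ℂ, Wᴴ * u = M * c) := by
    constructor
    · rintro ⟨v, hv0, hveq⟩
      refine ⟨Wᴴ * (B * v), ?_⟩
      have h1 : (1 - W * Wᴴ) * (B * v) = -r := by
        rw [Matrix.mul_assoc, Matrix.mul_assoc, hP v hv0, ← Matrix.mul_assoc] at hveq
        rw [Matrix.mul_assoc] at hveq
        exact hveq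
      have h2 : B * v - W * (Wᴴ * (B * v)) = -r := by
        rw [Matrix.sub_mul, Matrix.one_mul, Matrix.mul_assoc] at h1
        exact h1
      have h3 := congrArg (fun X => B⁻¹ * X) h2
      simp only [Matrix.mul_sub, Matrix.mul_neg, hBu] at h3
      have h3' : v - B⁻¹ * (W * (Wᴴ * (B * v))) = -u := by
        rw [← Matrix.mul_assoc, hinvB, Matrix.one_mul] at h3
        exact h3
      have h4 := congrArg (fun X => Wᴴ * X) h3'
      simp only [Matrix.mul_sub, Matrix.mul_neg, hv0] at h4
      rw [zero_sub, neg_inj] at h4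
      rw [hM, Matrix.mul_assoc, Matrix.mul_assoc]
      exact h4.symm
    · rintro ⟨c, hc⟩
      refine ⟨B⁻¹ * (W * c) - u, ?_, ?_⟩
      · rw [Matrix.mul_sub, hc, hM, Matrix.mul_assoc, Matrix.mul_assoc, sub_self]
      · have hv0 : Wᴴ * (B⁻¹ * (W * c) - u) = 0 := by
          rw [Matrix.mul_sub, hc, hM, Matrix.mul_assoc, Matrix.mul_assoc, sub_self]
        rw [Matrix.mul_assoc, Matrix.mul_assoc, hP _ hv0]
        have hBv : B * (B⁻¹ * (W * c) - u) = W * c - r := by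
          rw [Matrix.mul_sub, ← Matrix.mul_assoc, hBinv, Matrix.one_mul, hr]
        rw [← Matrix.mul_assoc, Matrix.mul_assoc, hBv]
        rw [Matrix.sub_mul, Matrix.one_mul, Matrix.mul_assoc, Matrix.mul_sub, hWr,
          ← Matrix.mul_assoc, hW, Matrix.one_mul]
        simp
  constructor
  · intro h
    have hnc : ¬ ∃ c : Matrix (Fin m) (Fin 1) ℂ, Wᴴ * u = M * c := fun hc => h (key.mpr hc)
    refine ⟨fun hMu => hnc ⟨M⁻¹ * (Wᴴ * u), ?_⟩, hnc⟩
    rw [← Matrix.mul_assoc, Matrix.mul_nonsing_inv M ((Matrix.isUnit_iff_isUnit_det M).mp hMu),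
      Matrix.one_mul]
  · rintro ⟨_, hnc⟩ hv
    exact hnc (key.mp hv)
end

section
/- The alternative correction equation (I - W W^H)(A - λ̃ I)(I - W W^H) v = -r, subject to the constraint W^H v = 0, has infinitely many solutions v (equivalently, at least two solutions) if and only if the m×m matrix M = W^H (A - λ̃ I)^{-1} W is singular and the vector z = W^H u lies in the column space (range) of M. -/
open Matrix

/-- The alternative correction equation
`(I - W Wᴴ)(A - λ̃ I)(I - W Wᴴ) v = -r`, subject to `Wᴴ v = 0`,
has infinitely many solutions `v` iff `M = Wᴴ (A - λ̃ I)⁻¹ W` is singular and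
`z = Wᴴ u` lies in the column space of `M`. -/
theorem alt_correction_infinitely_many_solutions_iff
    {n m : ℕ} (hm : m ≤ n)
    (A : Matrix (Fin n) (Fin n) ℂ) (lam : ℂ)
    (hA : IsUnit (A - lam • (1 : Matrix (Fin n) (Fin n) ℂ)))
    (W : Matrix (Fin n) (Fin m) ℂ) (hW : Wᴴ * W = 1)
    (u : Matrix (Fin n) (Fin 1) ℂ)
    (huW : ∃ c : Matrix (Fin m) (Fin 1) ℂ, u = W * c)
    (hu : uᴴ * u = 1)
    (hlam : (uᴴ * A * u) 0 0 = lam)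
    (r : Matrix (Fin n) (Fin 1) ℂ)
    (hr : r = (A - lam • 1) * u)
    (hWr : Wᴴ * r = 0)
    (M : Matrix (Fin m) (Fin m) ℂ)
    (hM : M = Wᴴ * (A - lam • (1 : Matrix (Fin n) (Fin n) ℂ))⁻¹ * W) :
    ({v : Matrix (Fin n) (Fin 1) ℂ |
        Wᴴ * v = 0 ∧
          (1 - W * Wᴴ) * (A - lam • 1) * (1 - W * Wᴴ) * v = -r}.Infinite) ↔
      (¬ IsUnit M ∧ ∃ c : Matrix (Fin m) (Fin 1) ℂ, Wᴴ * u = M * c) := by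
  subst hr hM
  set B := A - lam • (1 : Matrix (Fin n) (Fin n) ℂ) with hB
  have hdet : IsUnit B.det := (Matrix.isUnit_iff_isUnit_det B).mp hA
  have hBiB : ∀ x : Matrix (Fin n) (Fin 1) ℂ, B⁻¹ * (B * x) = x := by
    intro x; rw [← Matrix.mul_assoc, Matrix.nonsing_inv_mul B hdet, Matrix.one_mul]
  have hBBi : ∀ x : Matrix (Fin n) (Fin 1) ℂ, B * (B⁻¹ * x) = x := by
    intro x; rw [← Matrix.mul_assoc, Matrix.mul_nonsing_inv B hdet, Matrix.one_mul]
  have hWW : ∀ x : Matrix (Fin m) (Fin 1) ℂ, Wᴴ * (W * x) = x := by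
    intro x; rw [← Matrix.mul_assoc, hW, Matrix.one_mul]
  obtain ⟨c, hc⟩ := huW
  have hWBu : Wᴴ * (B * u) = 0 := hWr
  -- the projection `1 - W Wᴴ` fixes vectors orthogonal to the columns of `W`
  have proj : ∀ v : Matrix (Fin n) (Fin 1) ℂ, Wᴴ * v = 0 → (1 - W * Wᴴ) * v = v := by
    intro v hv
    rw [Matrix.sub_mul, Matrix.one_mul, Matrix.mul_assoc, hv, Matrix.mul_zero, sub_zero]
  -- parametrize solution set
  have hset : {v : Matrix (Fin n) (Fin 1) ℂ |
        Wᴴ * v = 0 ∧ (1 - W * Wᴴ) * B * (1 - W * Wᴴ) * v = -(B * u)} =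
      (fun s : Matrix (Fin m) (Fin 1) ℂ => -u + B⁻¹ * (W * s)) ''
        {s | Wᴴ * B⁻¹ * W * s = Wᴴ * u} := by
    ext v
    simp only [Set.mem_setOf_eq, Set.mem_image]
    constructor
    · rintro ⟨h1, h2⟩
      rw [Matrix.mul_assoc ((1 - W * Wᴴ) * B) (1 - W * Wᴴ) v, proj v h1,
        Matrix.mul_assoc (1 - W * Wᴴ) B v, Matrix.sub_mul, Matrix.one_mul,
        Matrix.mul_assoc W Wᴴ (B * v)] at h2
      set s := Wᴴ * (B * v) with hs
      have hBv : B * v = -(B * u) + W * s := by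
        rw [← h2]; abel
      have hveq : v = -u + B⁻¹ * (W * s) := by
        have h3 := congrArg (fun X => B⁻¹ * X) hBv
        simp only [Matrix.mul_add, Matrix.mul_neg, hBiB] at h3
        exact h3
      refine ⟨s, ?_, hveq.symm⟩
      have h1' := h1
      rw [hveq, Matrix.mul_add, Matrix.mul_neg, neg_add_eq_zero] at h1'
      simp only [Set.mem_setOf_eq, Matrix.mul_assoc]
      exact h1'.symm
    · rintro ⟨s, hs, rfl⟩
      simp only [Set.mem_setOf_eq, Matrix.mul_assoc] at hs
      have hWv : Wᴴ * (-u + B⁻¹ * (W * s)) = 0 := by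
        rw [Matrix.mul_add, Matrix.mul_neg, hs, neg_add_cancel]
      refine ⟨hWv, ?_⟩
      rw [Matrix.mul_assoc ((1 - W * Wᴴ) * B) (1 - W * Wᴴ) _, proj _ hWv,
        Matrix.mul_assoc (1 - W * Wᴴ) B _]
      simp only [Matrix.mul_add, Matrix.mul_neg, hBBi, Matrix.sub_mul, Matrix.one_mul,
        Matrix.mul_assoc, hWBu, hWW, Matrix.mul_zero, neg_zero, add_zero, zero_add]
      abel
  rw [hset, Set.infinite_image_iff]
  · constructor
    · intro hInf
      obtain ⟨c0, hc0⟩ := hInf.nonempty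
      simp only [Set.mem_setOf_eq] at hc0
      refine ⟨?_, c0, hc0.symm⟩
      intro hU
      have hUd := (Matrix.isUnit_iff_isUnit_det _).mp hU
      apply hInf
      apply Set.Finite.subset (Set.finite_singleton ((Wᴴ * B⁻¹ * W)⁻¹ * (Wᴴ * u)))
      intro s hsmem
      simp only [Set.mem_setOf_eq] at hsmem
      simp only [Set.mem_singleton_iff]
      calc s = (Wᴴ * B⁻¹ * W)⁻¹ * ((Wᴴ * B⁻¹ * W) * s) := by
              rw [← Matrix.mul_assoc, Matrix.nonsing_inv_mul _ hUd, Matrix.one_mul]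
        _ = (Wᴴ * B⁻¹ * W)⁻¹ * (Wᴴ * u) := by rw [hsmem]
    · rintro ⟨hNU, c0, hc0⟩
      have hdet0 : (Wᴴ * B⁻¹ * W).det = 0 := by
        by_contra h
        exact hNU ((Matrix.isUnit_iff_isUnit_det _).mpr (isUnit_iff_ne_zero.mpr h))
      obtain ⟨x, hx, hx0⟩ := (Matrix.exists_mulVec_eq_zero_iff).mpr hdet0
      set x' : Matrix (Fin m) (Fin 1) ℂ := Matrix.of (fun i _ => x i) with hx'
      have hx'0 : (Wᴴ * B⁻¹ * W) * x' = 0 := by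
        ext i j
        have := congrFun hx0 i
        simpa [hx', Matrix.mul_apply, Matrix.mulVec, dotProduct] using this
      have hx'ne : x' ≠ 0 := by
        intro h0
        apply hx
        funext i
        have := congrFun (congrFun h0 i) 0
        simpa [hx'] using this
      apply Set.infinite_of_injective_forall_mem
        (f := fun t : ℂ => c0 + t • x')
      · intro t1 t2 h
        have h2 := add_left_cancel h
        exact smul_left_injective ℂ hx'ne h2
      · intro t
        simp only [Set.mem_setOf_eq, Matrix.mul_add, Matrix.mul_smul, hx'0, smul_zero,
          add_zero, ← hc0]
  · intro s1 _ s2 _ h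
    simp only at h
    have h2 := add_left_cancel h
    have h3 := congrArg (fun X => Wᴴ * (B * X)) h2
    simpa only [hBBi, hWW] using h3
end

section
/- The two-sided Jacobi–Davidson left correction equation (I - p q^H)(A^H - θ̄ I)(I - p q^H) t = -r_p, subject to the constraint q^H t = 0, has exactly one solution t if and only if p^H (A - θ I)^{-1} q ≠ 0; and it has no solution if and only if p^H (A - θ I)^{-1} q = 0. -/
open Matrix

private lemma one_by_one_eq (s : Matrix (Fin 1) (Fin 1) ℂ) :
    s = s 0 0 • 1 := by
  ext i j
  fin_cases i <;> fin_cases j <;> simp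

private lemma mul_one_by_one {n : ℕ} (M : Matrix (Fin n) (Fin 1) ℂ)
    (s : Matrix (Fin 1) (Fin 1) ℂ) : M * s = s 0 0 • M := by
  ext i j
  fin_cases j
  simp [Matrix.mul_apply, Fin.sum_univ_one]
  exact mul_comm _ _

/-- The two-sided Jacobi–Davidson left correction equation
`(I - p qᴴ)(Aᴴ - θ̄ I)(I - p qᴴ) t = -r_p`, subject to `qᴴ t = 0`,
has exactly one solution iff `pᴴ (A - θ I)⁻¹ q ≠ 0`, and has no solution iff
`pᴴ (A - θ I)⁻¹ q = 0`. -/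
theorem two_sided_jd_left_correction
    {n : ℕ} (A : Matrix (Fin n) (Fin n) ℂ)
    (p q : Matrix (Fin n) (Fin 1) ℂ)
    (hpq : pᴴ * q = 1)
    (θ : ℂ) (hθ : θ = (pᴴ * A * q) 0 0)
    (hA : IsUnit (A - θ • (1 : Matrix (Fin n) (Fin n) ℂ)))
    (rp : Matrix (Fin n) (Fin 1) ℂ)
    (hrp : rp = (Aᴴ - (starRingEnd ℂ θ) • 1) * p) :
    ((∃! t : Matrix (Fin n) (Fin 1) ℂ,
        qᴴ * t = 0 ∧
          (1 - p * qᴴ) * (Aᴴ - (starRingEnd ℂ θ) • 1) * (1 - p * qᴴ) * t = -rp) ↔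
      (pᴴ * (A - θ • (1 : Matrix (Fin n) (Fin n) ℂ))⁻¹ * q) 0 0 ≠ 0) ∧
    ((¬ ∃ t : Matrix (Fin n) (Fin 1) ℂ,
        qᴴ * t = 0 ∧
          (1 - p * qᴴ) * (Aᴴ - (starRingEnd ℂ θ) • 1) * (1 - p * qᴴ) * t = -rp) ↔
      (pᴴ * (A - θ • (1 : Matrix (Fin n) (Fin n) ℂ))⁻¹ * q) 0 0 = 0) := by
  set B : Matrix (Fin n) (Fin n) ℂ := Aᴴ - (starRingEnd ℂ θ) • 1 with hBdef
  have hBct : B = (A - θ • 1)ᴴ := by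
    simp [hBdef, conjTranspose_sub, conjTranspose_smul]
  have hBu : IsUnit B := hBct ▸ (isUnit_conjTranspose (A - θ • 1)).mpr hA
  have hBdet : IsUnit B.det := (Matrix.isUnit_iff_isUnit_det B).mp hBu
  have hBinv1 : B⁻¹ * B = 1 := Matrix.nonsing_inv_mul B hBdet
  have hBinv2 : B * B⁻¹ = 1 := Matrix.mul_nonsing_inv B hBdet
  have hqp : qᴴ * p = 1 := by
    have := congrArg conjTranspose hpq
    simpa [conjTranspose_mul] using this
  have hpAq : pᴴ * A * q = θ • 1 := by
    have h := one_by_one_eq (pᴴ * A * q)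
    rw [← hθ] at h
    exact h
  have hqBp : qᴴ * B * p = 0 := by
    have h1 : pᴴ * Bᴴ * q = 0 := by
      rw [hBct, conjTranspose_conjTranspose]
      have hexp : pᴴ * (A - θ • 1) * q = pᴴ * A * q - θ • (pᴴ * q) := by
        rw [Matrix.mul_sub, Matrix.sub_mul, Matrix.mul_smul, Matrix.smul_mul, Matrix.mul_one]
      rw [hexp, hpAq, hpq, sub_self]
    have h2 : qᴴ * B * p = (pᴴ * Bᴴ * q)ᴴ := by
      simp [conjTranspose_mul, Matrix.mul_assoc]
    rw [h2, h1]
    simp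
  set c : ℂ := (pᴴ * (A - θ • (1 : Matrix (Fin n) (Fin n) ℂ))⁻¹ * q) 0 0 with hcdef
  have hcT : qᴴ * B⁻¹ * p = (pᴴ * (A - θ • (1 : Matrix (Fin n) (Fin n) ℂ))⁻¹ * q)ᴴ := by
    rw [conjTranspose_mul, conjTranspose_mul, conjTranspose_conjTranspose,
      Matrix.conjTranspose_nonsing_inv, ← hBct, Matrix.mul_assoc]
  set d : ℂ := (qᴴ * B⁻¹ * p) 0 0 with hddef
  have hdc : d = starRingEnd ℂ c := by
    rw [hddef, hcT, conjTranspose_apply, hcdef]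
    rfl
  have hdc0 : d = 0 ↔ c = 0 := by
    rw [hdc]; exact map_eq_zero _
  have hQ : qᴴ * B⁻¹ * p = d • 1 := one_by_one_eq _
  -- Forward direction: any solution t satisfies d * σ = 1 and t = σ • B⁻¹p - p
  have forward : ∀ t : Matrix (Fin n) (Fin 1) ℂ,
      qᴴ * t = 0 → (1 - p * qᴴ) * B * (1 - p * qᴴ) * t = -rp →
      d * (qᴴ * (B * t)) 0 0 = 1 ∧ t = (qᴴ * (B * t)) 0 0 • (B⁻¹ * p) - p := by
    intro t ht0 hte
    set σ : ℂ := (qᴴ * (B * t)) 0 0 with hσdef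
    have h1 : (1 - p * qᴴ) * t = t := by
      rw [Matrix.sub_mul, Matrix.one_mul, Matrix.mul_assoc, ht0, Matrix.mul_zero, sub_zero]
    rw [Matrix.mul_assoc ((1 - p * qᴴ) * B) (1 - p * qᴴ) t, h1, Matrix.mul_assoc] at hte
    -- hte : (1 - p*qᴴ) * (B * t) = -rp
    have h2 : B * t - σ • p = -(B * p) := by
      have : (1 - p * qᴴ) * (B * t) = B * t - σ • p := by
        rw [Matrix.sub_mul, Matrix.one_mul, Matrix.mul_assoc,
          ← Matrix.mul_assoc qᴴ B t]
        rw [show p * (qᴴ * B * t) = σ • p by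
          rw [Matrix.mul_assoc qᴴ B t, mul_one_by_one]]
      rw [this] at hte
      rw [hte, hrp, hBdef]
    have h3 : B * t = σ • p - B * p := by linear_combination (norm := module) h2
    have ht : t = σ • (B⁻¹ * p) - p := by
      have := congrArg (fun M => B⁻¹ * M) h3
      simp only [Matrix.mul_sub, Matrix.mul_smul] at this
      rw [← Matrix.mul_assoc, hBinv1, Matrix.one_mul, ← Matrix.mul_assoc, hBinv1,
        Matrix.one_mul] at this
      exact this
    refine ⟨?_, ht⟩
    have h4 : qᴴ * t = σ • (qᴴ * B⁻¹ * p) - qᴴ * p := by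
      rw [ht, Matrix.mul_sub, Matrix.mul_smul, Matrix.mul_assoc]
    rw [ht0, hQ, hqp, smul_smul] at h4
    have h5 := congrArg (fun M : Matrix (Fin 1) (Fin 1) ℂ => M 0 0) h4
    simp at h5
    linear_combination -h5
  -- Existence and uniqueness when d ≠ 0
  have backward : d ≠ 0 →
      ∀ t : Matrix (Fin n) (Fin 1) ℂ, t = d⁻¹ • (B⁻¹ * p) - p →
      qᴴ * t = 0 ∧ (1 - p * qᴴ) * B * (1 - p * qᴴ) * t = -rp := by
    intro hd t htdef
    have ht0 : qᴴ * t = 0 := by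
      rw [htdef, Matrix.mul_sub, Matrix.mul_smul, ← Matrix.mul_assoc, hQ, hqp,
        smul_smul, inv_mul_cancel₀ hd, one_smul, sub_self]
    refine ⟨ht0, ?_⟩
    have h1 : (1 - p * qᴴ) * t = t := by
      rw [Matrix.sub_mul, Matrix.one_mul, Matrix.mul_assoc, ht0, Matrix.mul_zero, sub_zero]
    rw [Matrix.mul_assoc ((1 - p * qᴴ) * B) (1 - p * qᴴ) t, h1, Matrix.mul_assoc]
    have hBt : B * t = d⁻¹ • p - B * p := by
      rw [htdef, Matrix.mul_sub, Matrix.mul_smul, ← Matrix.mul_assoc, hBinv2, Matrix.one_mul]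
    rw [hBt, Matrix.mul_sub, Matrix.mul_smul]
    have e1 : (1 - p * qᴴ) * p = 0 := by
      rw [Matrix.sub_mul, Matrix.one_mul, Matrix.mul_assoc, hqp, Matrix.mul_one, sub_self]
    have e2 : (1 - p * qᴴ) * (B * p) = B * p := by
      rw [Matrix.sub_mul, Matrix.one_mul, Matrix.mul_assoc, ← Matrix.mul_assoc qᴴ B p,
        hqBp, Matrix.mul_zero, sub_zero]
    rw [e1, e2, smul_zero, zero_sub, hrp, hBdef]
  have exists_unique : d ≠ 0 →
      ∃! t : Matrix (Fin n) (Fin 1) ℂ,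
        qᴴ * t = 0 ∧ (1 - p * qᴴ) * B * (1 - p * qᴴ) * t = -rp := by
    intro hd
    refine ⟨d⁻¹ • (B⁻¹ * p) - p, backward hd _ rfl, ?_⟩
    intro t ⟨ht0, hte⟩
    obtain ⟨hσ1, htt⟩ := forward t ht0 hte
    have hσ : (qᴴ * (B * t)) 0 0 = d⁻¹ := by
      field_simp
      linear_combination hσ1
    rw [htt, hσ]
  have no_sol : d = 0 →
      ¬ ∃ t : Matrix (Fin n) (Fin 1) ℂ,
        qᴴ * t = 0 ∧ (1 - p * qᴴ) * B * (1 - p * qᴴ) * t = -rp := by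
    intro hd ⟨t, ht0, hte⟩
    obtain ⟨hσ1, -⟩ := forward t ht0 hte
    rw [hd, zero_mul] at hσ1
    exact zero_ne_one hσ1
  constructor
  · constructor
    · intro hex hc0
      exact no_sol (hdc0.mpr hc0) hex.exists
    · intro hc0
      exact exists_unique (fun hd => hc0 (hdc0.mp hd))
  · constructor
    · intro hne
      by_contra hc0
      exact hne (exists_unique (fun hd => hc0 (hdc0.mp hd))).exists
    · intro hc0
      exact no_sol (hdc0.mpr hc0)
end

section
/- The alternating two-sided Jacobi–Davidson right correction equation (I - (q p^H)/(p^H q))(A - θ I)(I - q q^H) s = -r_q, subject to the constraint q^H s = 0, has exactly one solution s if and only if q^H (A - θ I)^{-1} q ≠ 0; and it has no solution if and only if q^H (A - θ I)^{-1} q = 0. -/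
open Matrix

private lemma one_by_one (M : Matrix (Fin 1) (Fin 1) ℂ) : M = M 0 0 • 1 := by
  ext i j
  fin_cases i; fin_cases j; simp

/-- The alternating two-sided Jacobi–Davidson right correction equation
`(I - (q pᴴ)/(pᴴ q))(A - θ I)(I - q qᴴ) s = -r_q`, subject to `qᴴ s = 0`,
has exactly one solution iff `qᴴ (A - θ I)⁻¹ q ≠ 0`, and has no solution iff
`qᴴ (A - θ I)⁻¹ q = 0`. -/
theorem alternating_two_sided_jd_right_correction
    {n : ℕ} (A : Matrix (Fin n) (Fin n) ℂ)
    (p q : Matrix (Fin n) (Fin 1) ℂ)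
    (hq : qᴴ * q = 1)
    (hpq : (pᴴ * q) 0 0 ≠ 0)
    (θ : ℂ) (hθ : θ = (pᴴ * A * q) 0 0 / (pᴴ * q) 0 0)
    (hA : IsUnit (A - θ • (1 : Matrix (Fin n) (Fin n) ℂ)))
    (rq : Matrix (Fin n) (Fin 1) ℂ)
    (hrq : rq = (A - θ • 1) * q) :
    ((∃! s : Matrix (Fin n) (Fin 1) ℂ,
        qᴴ * s = 0 ∧
          (1 - ((pᴴ * q) 0 0)⁻¹ • (q * pᴴ)) * (A - θ • 1) * (1 - q * qᴴ) * s = -rq) ↔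
      (qᴴ * (A - θ • (1 : Matrix (Fin n) (Fin n) ℂ))⁻¹ * q) 0 0 ≠ 0) ∧
    ((¬ ∃ s : Matrix (Fin n) (Fin 1) ℂ,
        qᴴ * s = 0 ∧
          (1 - ((pᴴ * q) 0 0)⁻¹ • (q * pᴴ)) * (A - θ • 1) * (1 - q * qᴴ) * s = -rq) ↔
      (qᴴ * (A - θ • (1 : Matrix (Fin n) (Fin n) ℂ))⁻¹ * q) 0 0 = 0) := by
  set B := A - θ • (1 : Matrix (Fin n) (Fin n) ℂ) with hB
  have hdet : IsUnit B.det := (Matrix.isUnit_iff_isUnit_det B).mp hA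
  have hBinv : B * B⁻¹ = 1 := Matrix.mul_nonsing_inv B hdet
  have hBinv' : B⁻¹ * B = 1 := Matrix.nonsing_inv_mul B hdet
  set c := (pᴴ * q) 0 0 with hc
  set P := (1 : Matrix (Fin n) (Fin n) ℂ) - c⁻¹ • (q * pᴴ) with hP
  set β := (qᴴ * B⁻¹ * q) 0 0 with hβ
  -- pᴴ B q = 0
  have hpqm : pᴴ * q = c • 1 := one_by_one _
  have hpBq : pᴴ * B * q = 0 := by
    have h1 : pᴴ * B * q = pᴴ * A * q - θ • (pᴴ * q) := by
      rw [hB]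
      rw [Matrix.mul_sub, Matrix.sub_mul, Matrix.mul_smul, Matrix.smul_mul,
        Matrix.mul_one]
    rw [h1, one_by_one (pᴴ * A * q), hpqm, hθ]
    ext i j
    fin_cases i; fin_cases j
    simp only [Matrix.sub_apply, Matrix.smul_apply, Matrix.one_apply_eq,
      smul_eq_mul, mul_one, Matrix.zero_apply]
    field_simp
    ring
  have hPq : P * q = 0 := by
    rw [hP, Matrix.sub_mul, Matrix.one_mul, Matrix.smul_mul, Matrix.mul_assoc,
      hpqm]
    have : q * ((c : ℂ) • (1 : Matrix (Fin 1) (Fin 1) ℂ)) = c • q := by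
      rw [Matrix.mul_smul, Matrix.mul_one]
    rw [this, smul_smul, inv_mul_cancel₀ hpq, one_smul, sub_self]
  have hPBq : P * (B * q) = B * q := by
    rw [hP, Matrix.sub_mul, Matrix.one_mul, Matrix.smul_mul, Matrix.mul_assoc,
      ← Matrix.mul_assoc pᴴ B q, hpBq, Matrix.mul_zero, smul_zero, sub_zero]
  have hker : ∀ x : Matrix (Fin n) (Fin 1) ℂ, P * x = 0 → ∃ α : ℂ, x = α • q := by
    intro x hx
    rw [hP, Matrix.sub_mul, Matrix.one_mul, sub_eq_zero] at hx
    refine ⟨c⁻¹ * (pᴴ * x) 0 0, ?_⟩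
    conv_lhs => rw [hx]
    rw [Matrix.smul_mul, Matrix.mul_assoc, one_by_one (pᴴ * x),
      Matrix.mul_smul, Matrix.mul_one, smul_smul]
    simp
  have hqBiq : qᴴ * (B⁻¹ * q) = β • 1 := by
    rw [← Matrix.mul_assoc]; exact one_by_one _
  -- key characterization
  have hchar : ∀ s : Matrix (Fin n) (Fin 1) ℂ,
      (qᴴ * s = 0 ∧ P * B * (1 - q * qᴴ) * s = -rq) ↔
      (β ≠ 0 ∧ s = β⁻¹ • (B⁻¹ * q) - q) := by
    intro s
    constructor
    · rintro ⟨hs0, hseq⟩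
      have hQs : (1 - q * qᴴ) * s = s := by
        rw [Matrix.sub_mul, Matrix.one_mul, Matrix.mul_assoc, hs0,
          Matrix.mul_zero, sub_zero]
      rw [Matrix.mul_assoc (P * B), hQs, hrq, Matrix.mul_assoc] at hseq
      -- P * (B * s) = -(B * q)
      have hsum : P * (B * (s + q)) = 0 := by
        rw [Matrix.mul_add, Matrix.mul_add, hseq, hPBq, neg_add_cancel]
      obtain ⟨α, hα⟩ := hker _ hsum
      have hsq : s + q = α • (B⁻¹ * q) := by
        have := congrArg (fun M => B⁻¹ * M) hα
        simp only [Matrix.mul_smul] at this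
        rwa [← Matrix.mul_assoc, hBinv', Matrix.one_mul] at this
      have hs' : s = α • (B⁻¹ * q) - q := by
        rw [← hsq]; exact (add_sub_cancel_right s q).symm
      -- apply qᴴ
      have h0 : (α * β - 1 : ℂ) • (1 : Matrix (Fin 1) (Fin 1) ℂ) = 0 := by
        have := hs0
        rw [hs', Matrix.mul_sub, Matrix.mul_smul, hqBiq, hq, smul_smul] at this
        rw [sub_smul, one_smul]
        exact this
      have hαβ : α * β = 1 := by
        have := congrFun (congrFun h0 0) 0
        simp only [Matrix.smul_apply, Matrix.one_apply_eq, smul_eq_mul, mul_one,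
          Matrix.zero_apply] at this
        exact sub_eq_zero.mp this
      have hβne : β ≠ 0 := by
        intro h
        rw [h, mul_zero] at hαβ
        exact one_ne_zero hαβ.symm
      refine ⟨hβne, ?_⟩
      have hαval : α = β⁻¹ := by
        field_simp
        linear_combination hαβ
      rw [hs', hαval]
    · rintro ⟨hβne, hs⟩
      have hs0 : qᴴ * s = 0 := by
        rw [hs, Matrix.mul_sub, Matrix.mul_smul, hqBiq, hq, smul_smul,
          inv_mul_cancel₀ hβne, one_smul, sub_self]
      refine ⟨hs0, ?_⟩
      have hQs : (1 - q * qᴴ) * s = s := by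
        rw [Matrix.sub_mul, Matrix.one_mul, Matrix.mul_assoc, hs0,
          Matrix.mul_zero, sub_zero]
      rw [Matrix.mul_assoc (P * B), hQs, hrq, hs, Matrix.mul_assoc,
        Matrix.mul_sub, Matrix.mul_smul, ← Matrix.mul_assoc B B⁻¹ q, hBinv,
        Matrix.one_mul, Matrix.mul_sub, Matrix.mul_smul, hPq, smul_zero,
        hPBq, zero_sub]
  constructor
  · constructor
    · rintro ⟨s, hsol, _⟩
      exact ((hchar s).mp hsol).1
    · intro hβne
      refine ⟨β⁻¹ • (B⁻¹ * q) - q, (hchar _).mpr ⟨hβne, rfl⟩, ?_⟩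
      intro y hy
      exact ((hchar y).mp hy).2
  · constructor
    · intro hne
      by_contra hβne
      exact hne ⟨β⁻¹ • (B⁻¹ * q) - q, (hchar _).mpr ⟨hβne, rfl⟩⟩
    · rintro hβ0 ⟨s, hsol⟩
      exact ((hchar s).mp hsol).1 hβ0
end

section
/- The alternating two-sided Jacobi–Davidson left correction equation (I - (p q^H)/(q^H p))(A^H - θ̄ I)(I - p p^H) t = -r_p, subject to the constraint p^H t = 0, has exactly one solution t if and only if p^H (A - θ I)^{-1} p ≠ 0; and it has no solution if and only if p^H (A - θ I)^{-1} p = 0. -/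
open Matrix

private lemma mul_oneone {n : ℕ} (x : Matrix (Fin n) (Fin 1) ℂ)
    (M : Matrix (Fin 1) (Fin 1) ℂ) : x * M = M 0 0 • x := by
  ext i j
  rw [Subsingleton.elim j 0]
  simp [Matrix.mul_apply, Fin.sum_univ_one, mul_comm]

private lemma entry_eq {M N : Matrix (Fin 1) (Fin 1) ℂ} (h : M 0 0 = N 0 0) : M = N := by
  ext i j
  rw [Subsingleton.elim i 0, Subsingleton.elim j 0]
  exact h

/-- The alternating two-sided Jacobi–Davidson left correction equation
`(I - (p qᴴ)/(qᴴ p))(Aᴴ - θ̄ I)(I - p pᴴ) t = -r_p`, subject to `pᴴ t = 0`,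
has exactly one solution iff `pᴴ (A - θ I)⁻¹ p ≠ 0`, and has no solution iff
`pᴴ (A - θ I)⁻¹ p = 0`. -/
theorem alternating_two_sided_jd_left_correction
    {n : ℕ} (A : Matrix (Fin n) (Fin n) ℂ)
    (p q : Matrix (Fin n) (Fin 1) ℂ)
    (hp : pᴴ * p = 1)
    (hpq : (pᴴ * q) 0 0 ≠ 0)
    (θ : ℂ) (hθ : θ = (pᴴ * A * q) 0 0 / (pᴴ * q) 0 0)
    (hA : IsUnit (A - θ • (1 : Matrix (Fin n) (Fin n) ℂ)))
    (rp : Matrix (Fin n) (Fin 1) ℂ)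
    (hrp : rp = (Aᴴ - (starRingEnd ℂ θ) • 1) * p) :
    ((∃! t : Matrix (Fin n) (Fin 1) ℂ,
        pᴴ * t = 0 ∧
          (1 - ((qᴴ * p) 0 0)⁻¹ • (p * qᴴ)) * (Aᴴ - (starRingEnd ℂ θ) • 1) *
              (1 - p * pᴴ) * t = -rp) ↔
      (pᴴ * (A - θ • (1 : Matrix (Fin n) (Fin n) ℂ))⁻¹ * p) 0 0 ≠ 0) ∧
    ((¬ ∃ t : Matrix (Fin n) (Fin 1) ℂ,
        pᴴ * t = 0 ∧
          (1 - ((qᴴ * p) 0 0)⁻¹ • (p * qᴴ)) * (Aᴴ - (starRingEnd ℂ θ) • 1) *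
              (1 - p * pᴴ) * t = -rp) ↔
      (pᴴ * (A - θ • (1 : Matrix (Fin n) (Fin n) ℂ))⁻¹ * p) 0 0 = 0) := by
  set M := A - θ • (1 : Matrix (Fin n) (Fin n) ℂ) with hM
  set B := Aᴴ - (starRingEnd ℂ θ) • (1 : Matrix (Fin n) (Fin n) ℂ) with hBdef
  have hBM : B = Mᴴ := by
    rw [hM, conjTranspose_sub, conjTranspose_smul, conjTranspose_one]
    rfl
  have hdetM : IsUnit M.det := (Matrix.isUnit_iff_isUnit_det M).mp hA
  have hdetB : IsUnit B.det := by
    rw [hBM, Matrix.det_conjTranspose]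
    exact hdetM.star
  have hB1 : B * B⁻¹ = 1 := Matrix.mul_nonsing_inv B hdetB
  have hB2 : B⁻¹ * B = 1 := Matrix.nonsing_inv_mul B hdetB
  set c := (qᴴ * p) 0 0 with hc
  have hc0 : c ≠ 0 := by
    have h1 : qᴴ * p = (pᴴ * q)ᴴ := by
      rw [conjTranspose_mul, conjTranspose_conjTranspose]
    rw [hc, h1, conjTranspose_apply]
    simpa using star_ne_zero.mpr hpq
  set s := (pᴴ * B⁻¹ * p) 0 0 with hs
  set g := (pᴴ * M⁻¹ * p) 0 0 with hg
  have hsg : s = starRingEnd ℂ g := by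
    have h1 : B⁻¹ = (M⁻¹)ᴴ := by rw [hBM, ← Matrix.conjTranspose_nonsing_inv]
    have h2 : pᴴ * (M⁻¹)ᴴ * p = (pᴴ * M⁻¹ * p)ᴴ := by
      rw [conjTranspose_mul, conjTranspose_mul, conjTranspose_conjTranspose,
        Matrix.mul_assoc]
    rw [hs, h1, h2, conjTranspose_apply, hg]
    rfl
  have hsg0 : s = 0 ↔ g = 0 := by rw [hsg]; exact map_eq_zero _
  -- the key scalar identity: qᴴ (Aᴴ - θ̄ I) p = 0
  have hqBp : qᴴ * (B * p) = 0 := by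
    have h1 : pᴴ * M * q = 0 := by
      apply entry_eq
      have he : pᴴ * M * q = pᴴ * A * q - θ • (pᴴ * q) := by
        rw [hM, Matrix.mul_sub, Matrix.mul_smul, Matrix.mul_one, Matrix.sub_mul,
          Matrix.smul_mul]
      rw [he]
      simp only [Matrix.sub_apply, Matrix.smul_apply, Matrix.zero_apply, smul_eq_mul, hθ]
      field_simp
      ring
    have h2 : qᴴ * (B * p) = (pᴴ * M * q)ᴴ := by
      rw [hBM, conjTranspose_mul, conjTranspose_mul, conjTranspose_conjTranspose]
    rw [h2, h1, conjTranspose_zero]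
  -- action of the left projector
  have hPi : ∀ x : Matrix (Fin n) (Fin 1) ℂ,
      (1 - c⁻¹ • (p * qᴴ)) * x = x - (c⁻¹ * (qᴴ * x) 0 0) • p := by
    intro x
    rw [Matrix.sub_mul, Matrix.one_mul, Matrix.smul_mul, Matrix.mul_assoc,
      mul_oneone p (qᴴ * x), smul_smul]
  -- keyB : every solution has the explicit form, and s ≠ 0
  have keyB : ∀ t : Matrix (Fin n) (Fin 1) ℂ, pᴴ * t = 0 →
      (1 - c⁻¹ • (p * qᴴ)) * B * (1 - p * pᴴ) * t = -rp →
      s ≠ 0 ∧ t = s⁻¹ • (B⁻¹ * p) - p := by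
    intro t ht0 hteq
    have hproj : (1 - p * pᴴ) * t = t := by
      rw [Matrix.sub_mul, Matrix.one_mul, Matrix.mul_assoc, ht0, Matrix.mul_zero,
        sub_zero]
    have heq : (1 - c⁻¹ • (p * qᴴ)) * (B * t) = -(B * p) := by
      have e1 : (1 - c⁻¹ • (p * qᴴ)) * B * (1 - p * pᴴ) * t
          = (1 - c⁻¹ • (p * qᴴ)) * (B * t) := by
        rw [Matrix.mul_assoc _ _ t, hproj, Matrix.mul_assoc]
      rw [← e1, hteq, hrp]
    rw [hPi] at heq
    set α := c⁻¹ * (qᴴ * (B * t)) 0 0 with hα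
    have hBt : B * t = α • p - B * p := by
      rw [sub_eq_iff_eq_add] at heq
      rw [heq, neg_add_eq_sub]
    have htform : t = α • (B⁻¹ * p) - p := by
      have h1 : B⁻¹ * (B * t) = t := by
        rw [← Matrix.mul_assoc, hB2, Matrix.one_mul]
      rw [← h1, hBt, Matrix.mul_sub, Matrix.mul_smul, ← Matrix.mul_assoc, hB2,
        Matrix.one_mul]
    have hαs : α * s = 1 := by
      have h0 : (0 : Matrix (Fin 1) (Fin 1) ℂ) = α • (pᴴ * (B⁻¹ * p)) - 1 := by
        rw [← hp, ← ht0, htform, Matrix.mul_sub, Matrix.mul_smul]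
      have h00 := congrArg (fun X : Matrix (Fin 1) (Fin 1) ℂ => X 0 0) h0
      simp only [Matrix.sub_apply, Matrix.smul_apply, Matrix.zero_apply, smul_eq_mul,
        Matrix.one_apply_eq] at h00
      have hsa : (pᴴ * (B⁻¹ * p)) 0 0 = s := by rw [hs, Matrix.mul_assoc]
      rw [hsa] at h00
      exact sub_eq_zero.mp h00.symm
    have hs0 : s ≠ 0 := by
      intro h
      rw [h, mul_zero] at hαs
      exact one_ne_zero hαs.symm
    have hαval : α = s⁻¹ := eq_inv_of_mul_eq_one_left hαs
    exact ⟨hs0, by rw [← hαval]; exact htform⟩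
  -- keyA : when s ≠ 0 the explicit form is a solution
  have keyA : s ≠ 0 → (pᴴ * (s⁻¹ • (B⁻¹ * p) - p) = 0 ∧
      (1 - c⁻¹ • (p * qᴴ)) * B * (1 - p * pᴴ) * (s⁻¹ • (B⁻¹ * p) - p) = -rp) := by
    intro hs0
    set t₀ := s⁻¹ • (B⁻¹ * p) - p with ht₀
    have ht0 : pᴴ * t₀ = 0 := by
      apply entry_eq
      rw [ht₀, Matrix.mul_sub, Matrix.mul_smul, hp]
      simp only [Matrix.sub_apply, Matrix.smul_apply, Matrix.zero_apply, smul_eq_mul,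
        Matrix.one_apply_eq]
      have hsa : (pᴴ * (B⁻¹ * p)) 0 0 = s := by rw [hs, Matrix.mul_assoc]
      rw [hsa, inv_mul_cancel₀ hs0, sub_self]
    refine ⟨ht0, ?_⟩
    have hproj : (1 - p * pᴴ) * t₀ = t₀ := by
      rw [Matrix.sub_mul, Matrix.one_mul, Matrix.mul_assoc, ht0, Matrix.mul_zero,
        sub_zero]
    have hBt : B * t₀ = s⁻¹ • p - B * p := by
      rw [ht₀, Matrix.mul_sub, Matrix.mul_smul, ← Matrix.mul_assoc, hB1, Matrix.one_mul]
    calc (1 - c⁻¹ • (p * qᴴ)) * B * (1 - p * pᴴ) * t₀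
        = (1 - c⁻¹ • (p * qᴴ)) * (B * t₀) := by
          rw [Matrix.mul_assoc ((1 - c⁻¹ • (p * qᴴ)) * B), hproj, Matrix.mul_assoc]
      _ = -rp := by
          rw [hPi, hBt]
          have hq : qᴴ * (s⁻¹ • p - B * p) = s⁻¹ • (qᴴ * p) := by
            rw [Matrix.mul_sub, Matrix.mul_smul, hqBp, sub_zero]
          rw [hq]
          have hco : c⁻¹ * (s⁻¹ • (qᴴ * p)) 0 0 = s⁻¹ := by
            simp only [Matrix.smul_apply, smul_eq_mul, ← hc]
            field_simp
          rw [hco, hrp]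
          module
  constructor
  · constructor
    · rintro ⟨t, ⟨ht0, hteq⟩, -⟩
      exact fun hgz => (keyB t ht0 hteq).1 (hsg0.mpr hgz)
    · intro hg0
      have hs0 : s ≠ 0 := fun h => hg0 (hsg0.mp h)
      obtain ⟨h1, h2⟩ := keyA hs0
      refine ⟨s⁻¹ • (B⁻¹ * p) - p, ⟨h1, h2⟩, ?_⟩
      rintro y ⟨hy1, hy2⟩
      exact (keyB y hy1 hy2).2
  · constructor
    · intro hne
      by_contra hgz
      have hs0 : s ≠ 0 := fun h => hgz (hsg0.mp h)
      obtain ⟨h1, h2⟩ := keyA hs0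
      exact hne ⟨_, h1, h2⟩
    · rintro hg0 ⟨t, ht0, hteq⟩
      exact (keyB t ht0 hteq).1 (hsg0.mpr hg0)
end

section
/- The correction equation (I - u u^H)(A - ρ I)(I - u u^H) t = -r, subject to the constraint u^H t = 0, has exactly one solution t if and only if ρ is not an eigenvalue of the (n-1)×(n-1) matrix U_⊥^H A U_⊥. -/
open Matrix

/-- The correction equation `(I - u uᴴ)(A - ρ I)(I - u uᴴ) t = -r`, subject to
`uᴴ t = 0`, has exactly one solution iff `ρ` is not an eigenvalue of
`U⊥ᴴ A U⊥`, where `[u, U⊥]` is unitary. -/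
theorem correction_unique_iff_not_eigenvalue
    {n : ℕ} (hn : 2 ≤ n)
    (A : Matrix (Fin n) (Fin n) ℂ)
    (u : Matrix (Fin n) (Fin 1) ℂ)
    (U : Matrix (Fin n) (Fin (n - 1)) ℂ)
    (hU₁ : (fromCols u U)ᴴ * fromCols u U = 1)
    (hU₂ : fromCols u U * (fromCols u U)ᴴ = 1)
    (ρ : ℂ) (hρ : ρ = (uᴴ * A * u) 0 0)
    (r : Matrix (Fin n) (Fin 1) ℂ)
    (hr : r = (A - ρ • 1) * u) :
    (∃! t : Matrix (Fin n) (Fin 1) ℂ,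
        uᴴ * t = 0 ∧
          (1 - u * uᴴ) * (A - ρ • 1) * (1 - u * uᴴ) * t = -r) ↔
      ρ ∉ spectrum ℂ (Uᴴ * A * U) := by
  rw [conjTranspose_fromCols_eq_fromRows_conjTranspose] at hU₁ hU₂
  rw [fromRows_mul_fromCols] at hU₁
  rw [fromCols_mul_fromRows] at hU₂
  have huu : uᴴ * u = 1 := by
    ext i j
    have := congrFun (congrFun hU₁ (Sum.inl i)) (Sum.inl j)
    simpa [Matrix.one_apply] using this
  have huU : uᴴ * U = 0 := by
    ext i j
    have := congrFun (congrFun hU₁ (Sum.inl i)) (Sum.inr j)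
    simpa [Matrix.one_apply] using this
  have hUu : Uᴴ * u = 0 := by
    ext i j
    have := congrFun (congrFun hU₁ (Sum.inr i)) (Sum.inl j)
    simpa [Matrix.one_apply] using this
  have hUU : Uᴴ * U = 1 := by
    ext i j
    have := congrFun (congrFun hU₁ (Sum.inr i)) (Sum.inr j)
    simpa [Matrix.one_apply] using this
  have hsum : u * uᴴ + U * Uᴴ = 1 := hU₂
  set B : Matrix (Fin (n - 1)) (Fin (n - 1)) ℂ := Uᴴ * A * U - ρ • 1 with hBdef
  have hρ1 : uᴴ * A * u = ρ • 1 := by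
    ext i j
    fin_cases i; fin_cases j
    simp [hρ]
  have hρ1' : uᴴ * (A * u) = ρ • 1 := by rw [← Matrix.mul_assoc]; exact hρ1
  have hur : uᴴ * r = 0 := by
    rw [hr]
    simp only [Matrix.sub_mul, Matrix.mul_sub, Matrix.smul_mul, Matrix.one_mul,
      Matrix.mul_smul, hρ1', huu, smul_zero, sub_self]
  have hrU : U * (Uᴴ * r) = r := by
    have h : (u * uᴴ + U * Uᴴ) * r = r := by rw [hsum, Matrix.one_mul]
    rwa [Matrix.add_mul, Matrix.mul_assoc, Matrix.mul_assoc, hur, Matrix.mul_zero,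
      zero_add] at h
  have hP : (1 : Matrix (Fin n) (Fin n) ℂ) - u * uᴴ = U * Uᴴ := by
    rw [← hsum]; abel
  have cancelU : ∀ (X : Matrix (Fin (n - 1)) (Fin 1) ℂ), Uᴴ * (U * X) = X := by
    intro X; rw [← Matrix.mul_assoc, hUU, Matrix.one_mul]
  have hBU : ∀ s : Matrix (Fin (n - 1)) (Fin 1) ℂ,
      Uᴴ * ((A - ρ • 1) * (U * s)) = B * s := by
    intro s
    simp only [hBdef, Matrix.sub_mul, Matrix.mul_sub, Matrix.smul_mul,
      Matrix.mul_smul, Matrix.one_mul, Matrix.mul_assoc, cancelU]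
  have key : ∀ t : Matrix (Fin n) (Fin 1) ℂ,
      (uᴴ * t = 0 ∧ (1 - u * uᴴ) * (A - ρ • 1) * (1 - u * uᴴ) * t = -r) ↔
      (t = U * (Uᴴ * t) ∧ B * (Uᴴ * t) = -(Uᴴ * r)) := by
    intro t
    constructor
    · rintro ⟨h1, h2⟩
      have ht : t = U * (Uᴴ * t) := by
        have h : (u * uᴴ + U * Uᴴ) * t = t := by rw [hsum, Matrix.one_mul]
        rw [Matrix.add_mul, Matrix.mul_assoc, Matrix.mul_assoc, h1, Matrix.mul_zero,
          zero_add] at h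
        exact h.symm
      refine ⟨ht, ?_⟩
      rw [hP] at h2
      rw [Matrix.mul_assoc (U * Uᴴ * (A - ρ • 1)) (U * Uᴴ) t,
        Matrix.mul_assoc U Uᴴ t, ← ht, Matrix.mul_assoc (U * Uᴴ) (A - ρ • 1) t] at h2
      nth_rewrite 1 [ht] at h2
      rw [Matrix.mul_assoc U Uᴴ ((A - ρ • 1) * (U * (Uᴴ * t))), hBU] at h2
      have h3 := congrArg (fun X => Uᴴ * X) h2
      simp only [cancelU] at h3
      rw [h3, Matrix.mul_neg]
    · rintro ⟨ht, hs⟩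
      constructor
      · rw [ht, ← Matrix.mul_assoc, huU, Matrix.zero_mul]
      · rw [hP, Matrix.mul_assoc (U * Uᴴ * (A - ρ • 1)) (U * Uᴴ) t,
          Matrix.mul_assoc U Uᴴ t, ← ht, Matrix.mul_assoc (U * Uᴴ) (A - ρ • 1) t]
        nth_rewrite 1 [ht]
        rw [Matrix.mul_assoc U Uᴴ ((A - ρ • 1) * (U * (Uᴴ * t))), hBU, hs,
          Matrix.mul_neg, hrU]
  have hspec : ρ ∉ spectrum ℂ (Uᴴ * A * U) ↔ IsUnit B := by
    rw [spectrum.notMem_iff, Algebra.algebraMap_eq_smul_one,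
      show ρ • (1 : Matrix (Fin (n - 1)) (Fin (n - 1)) ℂ) - Uᴴ * A * U = -B by
        rw [hBdef, neg_sub],
      IsUnit.neg_iff]
  rw [hspec]
  constructor
  · rintro ⟨t₀, ht₀, huniq⟩
    by_contra hB
    have hdet : B.det = 0 := by
      rw [Matrix.isUnit_iff_isUnit_det, isUnit_iff_ne_zero, not_not] at hB
      exact hB
    obtain ⟨v, hvne, hv⟩ := (Matrix.exists_mulVec_eq_zero_iff).2 hdet
    set V : Matrix (Fin (n - 1)) (Fin 1) ℂ := Matrix.of (fun i _ => v i) with hVdef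
    have hBV : B * V = 0 := by
      ext i j
      have := congrFun hv i
      simpa [hVdef, Matrix.mul_apply, Matrix.mulVec, dotProduct] using this
    have hVne : V ≠ 0 := by
      intro h
      apply hvne
      funext i
      have := congrFun (congrFun h i) 0
      simpa [hVdef] using this
    obtain ⟨ht1, ht2⟩ := (key t₀).1 ht₀
    have ht₁ : uᴴ * (t₀ + U * V) = 0 ∧
        (1 - u * uᴴ) * (A - ρ • 1) * (1 - u * uᴴ) * (t₀ + U * V) = -r := by
      rw [key]
      constructor
      · rw [Matrix.mul_add, cancelU, Matrix.mul_add, ← ht1]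
      · rw [Matrix.mul_add, cancelU, Matrix.mul_add, hBV, add_zero, ht2]
    have := huniq (t₀ + U * V) ht₁
    have hUV : U * V = 0 := by
      have h := sub_eq_zero.2 this
      simpa using h
    apply hVne
    rw [← cancelU V, hUV, Matrix.mul_zero]
  · intro hB
    have hdet : IsUnit B.det := (Matrix.isUnit_iff_isUnit_det B).1 hB
    set s₀ : Matrix (Fin (n - 1)) (Fin 1) ℂ := B⁻¹ * (-(Uᴴ * r)) with hs₀
    refine ⟨U * s₀, (key (U * s₀)).2 ⟨?_, ?_⟩, ?_⟩
    · rw [cancelU]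
    · rw [cancelU, hs₀, ← Matrix.mul_assoc, Matrix.mul_nonsing_inv B hdet,
        Matrix.one_mul]
    · intro t' ht'
      obtain ⟨h1, h2⟩ := (key t').1 ht'
      have : Uᴴ * t' = s₀ := by
        rw [hs₀, ← h2, ← Matrix.mul_assoc, Matrix.nonsing_inv_mul B hdet,
          Matrix.one_mul]
      rw [h1, this]
end

section
/- Suppose the Jacobi–Davidson correction equation (I - u u^H)(A - λ̃ I)(I - u u^H) v = -r with constraint u^H v = 0 has a unique solution v (i.e., U_⊥^H (A - λ̃ I) U_⊥ is invertible). Partition the inverse [U_⊥^H (A - λ̃ I) U_⊥]^{-1} = [[B_{11}, B_{12}], [B_{21}, B_{22}]] conformally with U_⊥ = [V̂_2, V̂_3], where B_{22} is (n-k)×(n-k). Then v does not lie in the column space of V_k if and only if V̂_3 B_{22} V̂_3^H r ≠ 0 (that is, r is not in the null space of V̂_3 B_{22} V̂_3^H). -/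
open Matrix

/-- Suppose the Jacobi–Davidson correction equation has a unique solution `v`
(i.e. `U⊥ᴴ (A - λ̃ I) U⊥` is invertible, where `U⊥ = [V̂₂, V̂₃]` and
`[u, V̂₂, V̂₃]` is unitary with `V_k = [u, V̂₂]`).  Partition
`[U⊥ᴴ (A - λ̃ I) U⊥]⁻¹` conformally, with lower-right block `B₂₂`.
Then `v` is not in the column space of `V_k` iff `V̂₃ B₂₂ V̂₃ᴴ r ≠ 0`. -/
theorem jd_expansion_iff_block_condition
    {n k : ℕ} (hk : 1 ≤ k) (hkn : k < n)
    (A : Matrix (Fin n) (Fin n) ℂ)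
    (u : Matrix (Fin n) (Fin 1) ℂ)
    (V₂ : Matrix (Fin n) (Fin (k - 1)) ℂ)
    (V₃ : Matrix (Fin n) (Fin (n - k)) ℂ)
    (hfull₁ : (fromCols u (fromCols V₂ V₃))ᴴ * fromCols u (fromCols V₂ V₃) = 1)
    (hfull₂ : fromCols u (fromCols V₂ V₃) * (fromCols u (fromCols V₂ V₃))ᴴ = 1)
    (lam : ℂ) (hlam : lam = (uᴴ * A * u) 0 0)
    (r : Matrix (Fin n) (Fin 1) ℂ)
    (hr : r = (A - lam • 1) * u)
    (hVr : (fromCols u V₂)ᴴ * r = 0)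
    (hinv : IsUnit ((fromCols V₂ V₃)ᴴ * (A - lam • 1) * fromCols V₂ V₃))
    (v : Matrix (Fin n) (Fin 1) ℂ)
    (hv₁ : uᴴ * v = 0)
    (hv₂ : (1 - u * uᴴ) * (A - lam • 1) * (1 - u * uᴴ) * v = -r)
    (B₂₂ : Matrix (Fin (n - k)) (Fin (n - k)) ℂ)
    (hB : B₂₂ = Matrix.toBlocks₂₂
        (((fromCols V₂ V₃)ᴴ * (A - lam • 1) * fromCols V₂ V₃)⁻¹)) :
    (¬ ∃ c : Matrix (Fin 1 ⊕ Fin (k - 1)) (Fin 1) ℂ, v = fromCols u V₂ * c) ↔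
      V₃ * B₂₂ * V₃ᴴ * r ≠ 0 := by
  set W : Matrix (Fin n) (Fin (k-1) ⊕ Fin (n-k)) ℂ := fromCols V₂ V₃ with hWdef
  set S : Matrix (Fin n) (Fin n) ℂ := A - lam • 1 with hSdef
  set M := Wᴴ * S * W with hMdef
  -- orthonormality relations
  have h1 : fromBlocks (uᴴ * u) (uᴴ * W) (Wᴴ * u) (Wᴴ * W)
      = fromBlocks 1 0 0 1 := by
    rw [← fromRows_mul_fromCols, ← conjTranspose_fromCols_eq_fromRows_conjTranspose,
      fromBlocks_one]
    exact hfull₁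
  obtain ⟨-, -, hWu, hWW⟩ := Matrix.fromBlocks_inj.mp h1
  have hWc : Wᴴ = fromRows V₂ᴴ V₃ᴴ := conjTranspose_fromCols_eq_fromRows_conjTranspose V₂ V₃
  have h2 : fromBlocks (V₂ᴴ * V₂) (V₂ᴴ * V₃) (V₃ᴴ * V₂) (V₃ᴴ * V₃)
      = fromBlocks 1 0 0 1 := by
    rw [← fromRows_mul_fromCols, ← hWc, fromBlocks_one, ← hWdef]
    exact hWW
  obtain ⟨-, -, hV₃V₂, hV₃V₃⟩ := Matrix.fromBlocks_inj.mp h2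
  have hV₃u : V₃ᴴ * u = 0 := by
    have := congrArg Matrix.toRows₂ (hWc ▸ hWu : fromRows V₂ᴴ V₃ᴴ * u = 0)
    simp only [fromRows_mul, toRows₂_fromRows] at this
    exact this
  -- completeness: W * Wᴴ = 1 - u * uᴴ
  have hP : W * Wᴴ = 1 - u * uᴴ := by
    have h' : u * uᴴ + W * Wᴴ = 1 := by
      rw [← fromCols_mul_fromRows, ← conjTranspose_fromCols_eq_fromRows_conjTranspose]
      exact hfull₂
    linear_combination (norm := noncomm_ring) h'
  -- r relations
  have hV₂r : V₂ᴴ * r = 0 := by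
    have h0 : fromRows (uᴴ * r) (V₂ᴴ * r) = 0 := by
      rw [← fromRows_mul, ← conjTranspose_fromCols_eq_fromRows_conjTranspose]
      exact hVr
    have := congrArg Matrix.toRows₂ h0
    simp only [toRows₂_fromRows] at this
    exact this
  have hWr : Wᴴ * r = fromRows 0 (V₃ᴴ * r) := by
    rw [hWc, fromRows_mul, hV₂r]
  -- (1 - u uᴴ) v = v
  have hPv : (1 - u * uᴴ) * v = v := by
    rw [Matrix.sub_mul, Matrix.one_mul, Matrix.mul_assoc, hv₁, Matrix.mul_zero, sub_zero]
  have hWP : Wᴴ * (1 - u * uᴴ) = Wᴴ := by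
    rw [Matrix.mul_sub, Matrix.mul_one, ← Matrix.mul_assoc, hWu, Matrix.zero_mul, sub_zero]
  -- key equation : M * (Wᴴ * v) = -(Wᴴ * r)
  have h3 : Wᴴ * (S * v) = -(Wᴴ * r) := by
    calc Wᴴ * (S * v) = Wᴴ * (1 - u * uᴴ) * (S * ((1 - u * uᴴ) * v)) := by rw [hWP, hPv]
      _ = Wᴴ * ((1 - u * uᴴ) * S * (1 - u * uᴴ) * v) := by simp only [Matrix.mul_assoc]
      _ = Wᴴ * (-r) := by rw [hv₂]
      _ = -(Wᴴ * r) := Matrix.mul_neg _ _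
  have key : M * (Wᴴ * v) = -(Wᴴ * r) := by
    calc M * (Wᴴ * v) = Wᴴ * (S * ((W * Wᴴ) * v)) := by
          rw [hMdef]; simp only [Matrix.mul_assoc]
      _ = Wᴴ * (S * ((1 - u * uᴴ) * v)) := by rw [hP]
      _ = Wᴴ * (S * v) := by rw [hPv]
      _ = -(Wᴴ * r) := h3
  have hdet : IsUnit M.det := (Matrix.isUnit_iff_isUnit_det M).mp hinv
  have hMinv : M⁻¹ * M = 1 := Matrix.nonsing_inv_mul M hdet
  have negRows : ∀ (a : Matrix (Fin (k-1)) (Fin 1) ℂ) (b : Matrix (Fin (n-k)) (Fin 1) ℂ),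
      -(fromRows a b) = fromRows (-a) (-b) := by
    intro a b; ext (i | i) j <;> simp
  have hWv : Wᴴ * v = fromRows (-(Matrix.toBlocks₁₂ M⁻¹ * (V₃ᴴ * r)))
      (-(B₂₂ * (V₃ᴴ * r))) := by
    have h' : Wᴴ * v = M⁻¹ * -(Wᴴ * r) := by
      rw [← key, ← Matrix.mul_assoc, hMinv, Matrix.one_mul]
    rw [h', hWr, Matrix.mul_neg, ← Matrix.fromBlocks_toBlocks M⁻¹,
      fromBlocks_mul_fromRows, Matrix.mul_zero, Matrix.mul_zero, zero_add, zero_add,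
      negRows, Matrix.fromBlocks_toBlocks, hB]
  have hV₃v : V₃ᴴ * v = -(B₂₂ * (V₃ᴴ * r)) := by
    have h4 : fromRows (V₂ᴴ * v) (V₃ᴴ * v) = Wᴴ * v := by rw [hWc, fromRows_mul]
    have := congrArg Matrix.toRows₂ (h4.trans hWv)
    simpa [toRows₂_fromRows] using this
  rw [not_iff_not.symm, not_not, not_not]
  constructor
  · rintro ⟨c, hc⟩
    have h5 : V₃ᴴ * v = 0 := by
      rw [hc, ← Matrix.mul_assoc, mul_fromCols, hV₃u, hV₃V₂, fromCols_zero,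
        Matrix.zero_mul]
    have h6 : B₂₂ * (V₃ᴴ * r) = 0 := by
      have := hV₃v.symm.trans h5
      simpa [neg_eq_zero] using this
    calc V₃ * B₂₂ * V₃ᴴ * r = V₃ * (B₂₂ * (V₃ᴴ * r)) := by simp only [Matrix.mul_assoc]
      _ = 0 := by rw [h6, Matrix.mul_zero]
  · intro h
    have h6 : B₂₂ * (V₃ᴴ * r) = 0 := by
      have h7 : V₃ᴴ * (V₃ * B₂₂ * V₃ᴴ * r) = 0 := by rw [h, Matrix.mul_zero]
      rwa [show V₃ᴴ * (V₃ * B₂₂ * V₃ᴴ * r) = (V₃ᴴ * V₃) * (B₂₂ * (V₃ᴴ * r)) by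
        simp only [Matrix.mul_assoc], hV₃V₃, Matrix.one_mul] at h7
    refine ⟨fromRows 0 (-(Matrix.toBlocks₁₂ M⁻¹ * (V₃ᴴ * r))), ?_⟩
    have hv' : v = W * (Wᴴ * v) := by
      rw [← Matrix.mul_assoc, hP, hPv]
    rw [hv', hWv, h6, neg_zero, hWdef, fromCols_mul_fromRows, Matrix.mul_zero, add_zero,
      fromCols_mul_fromRows, Matrix.mul_zero, zero_add]
end

section
/- Suppose u^H (A - λ̃ I)^{-1} u ≠ 0 and let v be the unique solution of the Jacobi–Davidson correction equation (I - u u^H)(A - λ̃ I)(I - u u^H) v = -r with constraint u^H v = 0. Then v does not lie in the column space of V_k if and only if u does not lie in the column space of the matrix (A - λ̃ I) V_k (equivalently, (A - λ̃ I)^{-1} u does not lie in the column space of V_k). -/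
open Matrix

/-- If the Jacobi–Davidson correction equation has a unique solution `v`
(i.e. `uᴴ (A - λ̃ I)⁻¹ u ≠ 0`), then `v` is not in the column space of `V_k`
iff `u` is not in the column space of `(A - λ̃ I) V_k`. -/
theorem jd_expansion_iff_u_not_in_range
    {n k : ℕ} (A : Matrix (Fin n) (Fin n) ℂ)
    (V : Matrix (Fin n) (Fin k) ℂ) (hV : Vᴴ * V = 1)
    (u : Matrix (Fin n) (Fin 1) ℂ)
    (huV : ∃ c : Matrix (Fin k) (Fin 1) ℂ, u = V * c)
    (hu : uᴴ * u = 1)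
    (lam : ℂ) (hlam : lam = (uᴴ * A * u) 0 0)
    (hA : IsUnit (A - lam • (1 : Matrix (Fin n) (Fin n) ℂ)))
    (r : Matrix (Fin n) (Fin 1) ℂ)
    (hr : r = (A - lam • 1) * u)
    (hα : (uᴴ * (A - lam • (1 : Matrix (Fin n) (Fin n) ℂ))⁻¹ * u) 0 0 ≠ 0)
    (v : Matrix (Fin n) (Fin 1) ℂ)
    (hv₁ : uᴴ * v = 0)
    (hv₂ : (1 - u * uᴴ) * (A - lam • 1) * (1 - u * uᴴ) * v = -r) :
    (¬ ∃ c : Matrix (Fin k) (Fin 1) ℂ, v = V * c) ↔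
      ¬ ∃ c : Matrix (Fin k) (Fin 1) ℂ, u = (A - lam • 1) * V * c := by
  set B := A - lam • (1 : Matrix (Fin n) (Fin n) ℂ) with hBdef
  have hdet : IsUnit B.det := (Matrix.isUnit_iff_isUnit_det B).mp hA
  have hBinv : B⁻¹ * B = 1 := Matrix.nonsing_inv_mul B hdet
  have hBinv' : B * B⁻¹ = 1 := Matrix.mul_nonsing_inv B hdet
  obtain ⟨c₀, hc₀⟩ := huV
  -- projection fixes v
  have hproj : (1 - u * uᴴ) * v = v := by
    rw [Matrix.sub_mul, Matrix.one_mul, Matrix.mul_assoc, hv₁, Matrix.mul_zero, sub_zero]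
  set w : Matrix (Fin 1) (Fin 1) ℂ := uᴴ * (B * v) with hwdef
  have h1 : B * v - u * w = -(B * u) := by
    have h := hv₂
    rw [hr] at h
    calc B * v - u * w
        = (1 - u * uᴴ) * (B * v) := by
          rw [Matrix.sub_mul (1 : Matrix (Fin n) (Fin n) ℂ) (u * uᴴ) (B * v),
            Matrix.one_mul, Matrix.mul_assoc, ← hwdef]
      _ = (1 - u * uᴴ) * B * (1 - u * uᴴ) * v := by
          conv_rhs => rw [Matrix.mul_assoc, hproj, Matrix.mul_assoc]
      _ = -(B * u) := h
  set s : ℂ := w 0 0 with hsdef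
  have hw : w = s • (1 : Matrix (Fin 1) (Fin 1) ℂ) := by
    ext i j
    fin_cases i; fin_cases j
    simp [hsdef]
  have hBv : B * v = s • u - B * u := by
    have h2 : B * v = u * w - B * u := by linear_combination (norm := module) h1
    rw [h2, hw, Matrix.mul_smul, Matrix.mul_one]
  have hveq : v = s • (B⁻¹ * u) - u := by
    have h2 : v = B⁻¹ * (B * v) := by rw [← Matrix.mul_assoc, hBinv, Matrix.one_mul]
    rw [h2, hBv, Matrix.mul_sub, Matrix.mul_smul, ← Matrix.mul_assoc, hBinv, Matrix.one_mul]
  have hsum : s • (B⁻¹ * u) = v + u := by rw [hveq]; abel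
  have hs : s ≠ 0 := by
    have h3 : uᴴ * (s • (B⁻¹ * u)) = uᴴ * v + uᴴ * u := by rw [hsum, Matrix.mul_add]
    rw [hv₁, hu, zero_add, Matrix.mul_smul] at h3
    have h4 : s * (uᴴ * (B⁻¹ * u)) 0 0 = 1 := by
      have h5 := congrArg (fun M => M 0 0) h3
      simpa [Matrix.smul_apply, Matrix.one_apply] using h5
    intro h0
    rw [h0, zero_mul] at h4
    exact zero_ne_one h4
  have hmid : (∃ c : Matrix (Fin k) (Fin 1) ℂ, v = V * c) ↔
      (∃ c : Matrix (Fin k) (Fin 1) ℂ, B⁻¹ * u = V * c) := by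
    constructor
    · rintro ⟨c, hc⟩
      refine ⟨s⁻¹ • (c + c₀), ?_⟩
      have h7 : s • (B⁻¹ * u) = V * (c + c₀) := by
        rw [Matrix.mul_add, ← hc, ← hc₀]; exact hsum
      rw [Matrix.mul_smul, ← h7, smul_smul, inv_mul_cancel₀ hs, one_smul]
    · rintro ⟨c, hc⟩
      refine ⟨s • c - c₀, ?_⟩
      rw [hveq, hc, hc₀, Matrix.mul_sub, Matrix.mul_smul]
  have hright : (∃ c : Matrix (Fin k) (Fin 1) ℂ, u = B * V * c) ↔
      (∃ c : Matrix (Fin k) (Fin 1) ℂ, B⁻¹ * u = V * c) := by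
    constructor
    · rintro ⟨c, hc⟩
      refine ⟨c, ?_⟩
      rw [hc, Matrix.mul_assoc, ← Matrix.mul_assoc B⁻¹, hBinv, Matrix.one_mul]
    · rintro ⟨c, hc⟩
      refine ⟨c, ?_⟩
      have h6 : B * (B⁻¹ * u) = B * (V * c) := by rw [hc]
      rw [← Matrix.mul_assoc, hBinv', Matrix.one_mul] at h6
      rw [h6, Matrix.mul_assoc]
  exact not_congr (hmid.trans hright.symm)
end

section
/- Suppose u^H (A - λ̃ I)^{-1} u ≠ 0 and let v be the unique solution of the Jacobi–Davidson correction equation (I - u u^H)(A - λ̃ I)(I - u u^H) v = -r with constraint u^H v = 0. If v lies in the column space of V_k (the Jacobi–Davidson method stagnates), then λ̃ is a defective eigenvalue of the projection matrix T_k = V_k^H A V_k; that is, there exists a vector h ∈ ℂ^k with (T_k - λ̃ I) h ≠ 0 and (T_k - λ̃ I)² h = 0. -/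
open Matrix

/-- If the Jacobi–Davidson method stagnates (the unique solution `v` of the
correction equation lies in the column space of `V_k`), then `λ̃` is a
defective eigenvalue of `T_k = V_kᴴ A V_k`: there is `h` with
`(T_k - λ̃ I) h ≠ 0` and `(T_k - λ̃ I)² h = 0`. -/
theorem jd_stagnation_implies_defective
    {n k : ℕ} (A : Matrix (Fin n) (Fin n) ℂ)
    (V : Matrix (Fin n) (Fin k) ℂ) (hV : Vᴴ * V = 1)
    (y : Matrix (Fin k) (Fin 1) ℂ) (lam : ℂ)
    (hy : (Vᴴ * A * V) * y = lam • y)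
    (u : Matrix (Fin n) (Fin 1) ℂ) (hu : u = V * y)
    (hunorm : uᴴ * u = 1)
    (hA : IsUnit (A - lam • (1 : Matrix (Fin n) (Fin n) ℂ)))
    (r : Matrix (Fin n) (Fin 1) ℂ)
    (hr : r = (A - lam • 1) * u)
    (hα : (uᴴ * (A - lam • (1 : Matrix (Fin n) (Fin n) ℂ))⁻¹ * u) 0 0 ≠ 0)
    (v : Matrix (Fin n) (Fin 1) ℂ)
    (hv₁ : uᴴ * v = 0)
    (hv₂ : (1 - u * uᴴ) * (A - lam • 1) * (1 - u * uᴴ) * v = -r)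
    (hstag : ∃ c : Matrix (Fin k) (Fin 1) ℂ, v = V * c) :
    ∃ h : Matrix (Fin k) (Fin 1) ℂ,
      (Vᴴ * A * V - lam • 1) * h ≠ 0 ∧
        (Vᴴ * A * V - lam • 1) ^ 2 * h = 0 := by
  obtain ⟨c, hc⟩ := hstag
  set B : Matrix (Fin n) (Fin n) ℂ := A - lam • 1 with hB
  set T : Matrix (Fin k) (Fin k) ℂ := Vᴴ * A * V with hT
  set β : Matrix (Fin 1) (Fin 1) ℂ := uᴴ * (B * v) with hβ
  have hTy : (T - lam • 1) * y = 0 := by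
    rw [Matrix.sub_mul, Matrix.smul_mul, Matrix.one_mul, hy, sub_self]
  -- key: B * v = u * β - r
  have hkey : B * v = u * β - r := by
    have h1 : (1 - u * uᴴ) * v = v := by
      rw [Matrix.sub_mul, Matrix.one_mul, Matrix.mul_assoc, hv₁, Matrix.mul_zero, sub_zero]
    have h2 : (1 - u * uᴴ) * B * (1 - u * uᴴ) * v = B * v - u * β := by
      rw [Matrix.mul_assoc ((1 - u * uᴴ) * B), h1, Matrix.sub_mul, Matrix.one_mul,
        Matrix.sub_mul, Matrix.mul_assoc (u * uᴴ), Matrix.mul_assoc u, ← hβ]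
    rw [h2] at hv₂
    linear_combination (norm := module) hv₂
  have hVu : Vᴴ * u = y := by
    rw [hu, ← Matrix.mul_assoc, hV, Matrix.one_mul]
  have hVr : Vᴴ * r = 0 := by
    rw [hr, hu, hB, Matrix.sub_mul, Matrix.smul_mul, Matrix.one_mul, Matrix.mul_sub,
      Matrix.mul_smul]
    simp only [← Matrix.mul_assoc]
    rw [hV, Matrix.one_mul, ← hT, hy, sub_self]
  have hTc : (T - lam • 1) * c = y * β := by
    have e : Vᴴ * (B * v) = y * β := by
      rw [hkey, Matrix.mul_sub, ← Matrix.mul_assoc, hVu, hVr, sub_zero]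
    rw [hc, hB] at e
    rw [← e, Matrix.sub_mul, Matrix.smul_mul, Matrix.one_mul, Matrix.sub_mul, Matrix.smul_mul,
      Matrix.one_mul, Matrix.mul_sub, Matrix.mul_smul]
    simp only [← Matrix.mul_assoc]
    rw [hV, Matrix.one_mul, hT]
  have hβne : β ≠ 0 := by
    intro h0
    have hBB : B * v = B * (-u) := by
      rw [hkey, h0, Matrix.mul_zero, zero_sub, hr, hB, Matrix.mul_neg]
    have hdet : IsUnit B.det := (Matrix.isUnit_iff_isUnit_det B).mp hA
    have hvu : v = -u := by
      have := congrArg (fun M => B⁻¹ * M) hBB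
      simpa [← Matrix.mul_assoc, Matrix.nonsing_inv_mul B hdet] using this
    rw [hvu, Matrix.mul_neg, hunorm, neg_eq_zero] at hv₁
    have := congrFun (congrFun hv₁ 0) 0
    simp [Matrix.one_apply] at this
  have hyy : yᴴ * y = 1 := by
    rw [hu, conjTranspose_mul, Matrix.mul_assoc, ← Matrix.mul_assoc Vᴴ, hV,
      Matrix.one_mul] at hunorm
    exact hunorm
  refine ⟨c, ?_, ?_⟩
  · rw [hTc]
    intro h0
    have : yᴴ * (y * β) = 0 := by rw [h0, Matrix.mul_zero]
    rw [← Matrix.mul_assoc, hyy, Matrix.one_mul] at this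
    exact hβne this
  · rw [pow_two, Matrix.mul_assoc, hTc, ← Matrix.mul_assoc, hTy, Matrix.zero_mul]
end

section
/- Suppose there exists h ∈ ℂ^k with u = (A - λ̃ I) V_k h. Then (T_k - λ̃ I) h = y, and consequently (T_k - λ̃ I) h ≠ 0 while (T_k - λ̃ I)² h = 0, where T_k = V_k^H A V_k. -/
open Matrix

/-- If `u = (A - λ̃ I) V_k h` for some `h`, then `(T_k - λ̃ I) h = y`, and
consequently `(T_k - λ̃ I) h ≠ 0` while `(T_k - λ̃ I)² h = 0`,
where `T_k = V_kᴴ A V_k`, `T_k y = λ̃ y`, `y ≠ 0` and `u = V_k y`. -/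
theorem jd_defectiveness_construction
    {n k : ℕ} (A : Matrix (Fin n) (Fin n) ℂ)
    (V : Matrix (Fin n) (Fin k) ℂ) (hV : Vᴴ * V = 1)
    (y : Matrix (Fin k) (Fin 1) ℂ) (hy0 : y ≠ 0) (lam : ℂ)
    (hy : (Vᴴ * A * V) * y = lam • y)
    (u : Matrix (Fin n) (Fin 1) ℂ) (hu : u = V * y)
    (h : Matrix (Fin k) (Fin 1) ℂ)
    (hh : u = (A - lam • 1) * V * h) :
    (Vᴴ * A * V - lam • 1) * h = y ∧
      (Vᴴ * A * V - lam • 1) * h ≠ 0 ∧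
      (Vᴴ * A * V - lam • 1) ^ 2 * h = 0 := by
  have h1 : Vᴴ * u = y := by rw [hu, ← Matrix.mul_assoc, hV, Matrix.one_mul]
  have key : (Vᴴ * A * V - lam • 1) * h = y := by
    rw [← h1, hh]
    simp [Matrix.sub_mul, Matrix.mul_sub, Matrix.smul_mul, Matrix.mul_smul,
      Matrix.one_mul, ← Matrix.mul_assoc, hV]
  refine ⟨key, by rw [key]; exact hy0, ?_⟩
  rw [pow_two, Matrix.mul_assoc, key, Matrix.sub_mul, hy, Matrix.smul_mul, Matrix.one_mul, sub_self]
end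

section
/- Suppose M := W^H (A - λ̃ I)^{-1} W is invertible and let v be the unique solution of the alternative correction equation (I - W W^H)(A - λ̃ I)(I - W W^H) v = -r with constraint W^H v = 0. Then v does not lie in the column space of V_k if and only if the vector W M^{-1} W^H u does not lie in the column space of the matrix (A - λ̃ I) V_k. -/
open Matrix

/-- Suppose `M = Wᴴ (A - λ̃ I)⁻¹ W` is invertible and `v` is the unique solution
of the alternative correction equation. Then `v` is not in the column space of
`V_k` iff `W M⁻¹ Wᴴ u` is not in the column space of `(A - λ̃ I) V_k`. -/
theorem alt_correction_expansion_iff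
    {n k m : ℕ} (A : Matrix (Fin n) (Fin n) ℂ) (lam : ℂ)
    (hA : IsUnit (A - lam • (1 : Matrix (Fin n) (Fin n) ℂ)))
    (V : Matrix (Fin n) (Fin k) ℂ) (hV : Vᴴ * V = 1)
    (W : Matrix (Fin n) (Fin m) ℂ) (hW : Wᴴ * W = 1)
    (hWV : ∀ x : Matrix (Fin m) (Fin 1) ℂ, ∃ c : Matrix (Fin k) (Fin 1) ℂ, W * x = V * c)
    (u : Matrix (Fin n) (Fin 1) ℂ)
    (huW : ∃ c : Matrix (Fin m) (Fin 1) ℂ, u = W * c)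
    (hu : uᴴ * u = 1)
    (hlam : (uᴴ * A * u) 0 0 = lam)
    (r : Matrix (Fin n) (Fin 1) ℂ)
    (hr : r = (A - lam • 1) * u)
    (hVr : Vᴴ * r = 0)
    (M : Matrix (Fin m) (Fin m) ℂ)
    (hM : M = Wᴴ * (A - lam • (1 : Matrix (Fin n) (Fin n) ℂ))⁻¹ * W)
    (hMunit : IsUnit M)
    (v : Matrix (Fin n) (Fin 1) ℂ)
    (hv₁ : Wᴴ * v = 0)
    (hv₂ : (1 - W * Wᴴ) * (A - lam • 1) * (1 - W * Wᴴ) * v = -r) :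
    (¬ ∃ c : Matrix (Fin k) (Fin 1) ℂ, v = V * c) ↔
      ¬ ∃ c : Matrix (Fin k) (Fin 1) ℂ, W * M⁻¹ * Wᴴ * u = (A - lam • 1) * V * c := by
  set B := A - lam • (1 : Matrix (Fin n) (Fin n) ℂ) with hB
  have hBdet : IsUnit B.det := (Matrix.isUnit_iff_isUnit_det B).mp hA
  have hB1 : B * B⁻¹ = 1 := Matrix.mul_nonsing_inv B hBdet
  have hB2 : B⁻¹ * B = 1 := Matrix.nonsing_inv_mul B hBdet
  have hMdet : IsUnit M.det := (Matrix.isUnit_iff_isUnit_det M).mp hMunit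
  obtain ⟨c, hc⟩ := huW
  have hWu : Wᴴ * u = c := by rw [hc, ← Matrix.mul_assoc, hW, Matrix.one_mul]
  obtain ⟨cu, hcu⟩ := hWV c
  have huV : u = V * cu := by rw [hc, hcu]
  set s := Wᴴ * (B * v) with hsdef
  have h1 : (1 - W * Wᴴ) * v = v := by
    rw [Matrix.sub_mul, Matrix.one_mul, Matrix.mul_assoc, hv₁, Matrix.mul_zero, sub_zero]
  have key : B * v - W * s = -r := by
    calc B * v - W * s = ((1 - W * Wᴴ) * B) * ((1 - W * Wᴴ) * v) := by
          rw [h1, Matrix.mul_assoc, Matrix.sub_mul 1 (W * Wᴴ) (B * v), Matrix.one_mul, hsdef, Matrix.mul_assoc]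
      _ = -r := by rw [← Matrix.mul_assoc]; exact hv₂
  have hkey2 : B * v = -r + W * s := eq_add_of_sub_eq key
  have hBr : B⁻¹ * r = u := by rw [hr, ← Matrix.mul_assoc, hB2, Matrix.one_mul]
  have hvform : v = -u + B⁻¹ * (W * s) := by
    calc v = B⁻¹ * (B * v) := by rw [← Matrix.mul_assoc, hB2, Matrix.one_mul]
      _ = B⁻¹ * (-r + W * s) := by rw [hkey2]
      _ = -u + B⁻¹ * (W * s) := by rw [Matrix.mul_add, Matrix.mul_neg, hBr]
  have hMs : M * s = c := by
    have h2 := hv₁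
    rw [hvform, Matrix.mul_add, Matrix.mul_neg, hWu] at h2
    have h3 : Wᴴ * (B⁻¹ * (W * s)) = c := by
      have := neg_add_eq_zero.mp h2
      exact this.symm
    rw [hM, Matrix.mul_assoc, Matrix.mul_assoc]
    exact h3
  have hs : s = M⁻¹ * c := by
    rw [← hMs, ← Matrix.mul_assoc, Matrix.nonsing_inv_mul M hMdet, Matrix.one_mul]
  have hWMW : W * M⁻¹ * Wᴴ * u = W * (M⁻¹ * c) := by
    rw [Matrix.mul_assoc, hWu, Matrix.mul_assoc]
  apply not_congr
  constructor
  · rintro ⟨d, hd⟩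
    refine ⟨d + cu, ?_⟩
    have hform : W * M⁻¹ * Wᴴ * u = B * (v + u) := by
      rw [hWMW, hvform, hs]
      have hadd : -u + B⁻¹ * (W * (M⁻¹ * c)) + u = B⁻¹ * (W * (M⁻¹ * c)) := by abel
      rw [hadd, ← Matrix.mul_assoc B B⁻¹, hB1, Matrix.one_mul]
    rw [hform, hd, huV, ← Matrix.mul_add V, Matrix.mul_assoc]
  · rintro ⟨d, hd⟩
    refine ⟨d - cu, ?_⟩
    have h2 : W * (M⁻¹ * c) = B * (V * d) := by
      rw [← hWMW, hd, Matrix.mul_assoc]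
    rw [hvform, hs, huV, h2, ← Matrix.mul_assoc, hB2, Matrix.one_mul, Matrix.mul_sub]
    abel
end

section
/- Suppose M := W^H (A - λ̃ I)^{-1} W is invertible. Then the vector v = -u + (A - λ̃ I)^{-1} W M^{-1} W^H u satisfies W^H v = 0 and (I - W W^H)(A - λ̃ I)(I - W W^H) v = -r, i.e., it is the unique solution of the alternative correction equation. -/
open Matrix

/-- If `M = Wᴴ (A - λ̃ I)⁻¹ W` is invertible, then
`v = -u + (A - λ̃ I)⁻¹ W M⁻¹ Wᴴ u` satisfies `Wᴴ v = 0` and the alternative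
correction equation, and it is the unique such solution. -/
theorem alt_correction_explicit_unique_solution
    {n m : ℕ} (hm : m ≤ n)
    (A : Matrix (Fin n) (Fin n) ℂ) (lam : ℂ)
    (hA : IsUnit (A - lam • (1 : Matrix (Fin n) (Fin n) ℂ)))
    (W : Matrix (Fin n) (Fin m) ℂ) (hW : Wᴴ * W = 1)
    (u : Matrix (Fin n) (Fin 1) ℂ)
    (huW : ∃ c : Matrix (Fin m) (Fin 1) ℂ, u = W * c)
    (hu : uᴴ * u = 1)
    (hlam : (uᴴ * A * u) 0 0 = lam)
    (r : Matrix (Fin n) (Fin 1) ℂ)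
    (hr : r = (A - lam • 1) * u)
    (hWr : Wᴴ * r = 0)
    (M : Matrix (Fin m) (Fin m) ℂ)
    (hM : M = Wᴴ * (A - lam • (1 : Matrix (Fin n) (Fin n) ℂ))⁻¹ * W)
    (hMunit : IsUnit M)
    (v : Matrix (Fin n) (Fin 1) ℂ)
    (hv : v = -u + (A - lam • (1 : Matrix (Fin n) (Fin n) ℂ))⁻¹ * W * M⁻¹ * Wᴴ * u) :
    Wᴴ * v = 0 ∧
      (1 - W * Wᴴ) * (A - lam • 1) * (1 - W * Wᴴ) * v = -r ∧
      ∀ w : Matrix (Fin n) (Fin 1) ℂ,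
        Wᴴ * w = 0 →
          (1 - W * Wᴴ) * (A - lam • 1) * (1 - W * Wᴴ) * w = -r → w = v := by
  set B := A - lam • (1 : Matrix (Fin n) (Fin n) ℂ) with hB
  have hBdet : IsUnit B.det := (Matrix.isUnit_iff_isUnit_det B).mp hA
  have hB1 : B⁻¹ * B = 1 := Matrix.nonsing_inv_mul B hBdet
  have hB2 : B * B⁻¹ = 1 := Matrix.mul_nonsing_inv B hBdet
  have hMdet : IsUnit M.det := (Matrix.isUnit_iff_isUnit_det M).mp hMunit
  have hM1 : M⁻¹ * M = 1 := Matrix.nonsing_inv_mul M hMdet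
  have hM2 : M * M⁻¹ = 1 := Matrix.mul_nonsing_inv M hMdet
  have hWv : Wᴴ * v = 0 := by
    rw [hv, Matrix.mul_add, Matrix.mul_neg]
    simp only [← Matrix.mul_assoc]
    rw [← hM, hM2, Matrix.one_mul, neg_add_cancel]
  refine ⟨hWv, ?_, ?_⟩
  · have hPv : (1 - W * Wᴴ) * v = v := by
      rw [Matrix.sub_mul, Matrix.one_mul, Matrix.mul_assoc, hWv, Matrix.mul_zero, sub_zero]
    have hBv : B * v = -r + W * (M⁻¹ * (Wᴴ * u)) := by
      rw [hv, Matrix.mul_add, Matrix.mul_neg, ← hr]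
      congr 1
      simp only [← Matrix.mul_assoc]
      rw [hB2, Matrix.one_mul]
    rw [Matrix.mul_assoc _ _ v, hPv, Matrix.mul_assoc, hBv]
    rw [Matrix.sub_mul, Matrix.one_mul, Matrix.mul_add, Matrix.mul_neg, Matrix.mul_assoc W Wᴴ, hWr,
      Matrix.mul_zero, neg_zero]
    rw [← Matrix.mul_assoc (W * Wᴴ), Matrix.mul_assoc W Wᴴ W, hW, Matrix.mul_one]
    abel
  · intro w hWw hcorr
    have hPw : (1 - W * Wᴴ) * w = w := by
      rw [Matrix.sub_mul, Matrix.one_mul, Matrix.mul_assoc, hWw, Matrix.mul_zero, sub_zero]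
    rw [Matrix.mul_assoc _ _ w, hPw] at hcorr
    -- hcorr : (1 - W*Wᴴ) * B * w = -r
    have hBw : B * w = -r + W * (Wᴴ * (B * w)) := by
      have h := hcorr
      rw [Matrix.sub_mul, Matrix.one_mul, Matrix.sub_mul, sub_eq_iff_eq_add] at h
      simpa only [Matrix.mul_assoc] using h
    set c := Wᴴ * (B * w) with hc
    have hwv : w = -u + B⁻¹ * (W * c) := by
      have : B⁻¹ * (B * w) = B⁻¹ * (-r + W * c) := by rw [← hBw]
      rw [← Matrix.mul_assoc, hB1, Matrix.one_mul] at this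
      rw [this, Matrix.mul_add, Matrix.mul_neg, hr, ← Matrix.mul_assoc, hB1, Matrix.one_mul]
    have hcval : c = M⁻¹ * (Wᴴ * u) := by
      have h0 : Wᴴ * w = 0 := hWw
      rw [hwv, Matrix.mul_add, Matrix.mul_neg, ← Matrix.mul_assoc, ← Matrix.mul_assoc,
        ← hM] at h0
      have h1 : M * c = Wᴴ * u := by
        have := h0
        rw [neg_add_eq_zero] at this
        exact this.symm
      calc c = M⁻¹ * (M * c) := by rw [← Matrix.mul_assoc, hM1, Matrix.one_mul]
        _ = M⁻¹ * (Wᴴ * u) := by rw [h1]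
    rw [hwv, hcval, hv]
    simp only [Matrix.mul_assoc]
end

section
/- Suppose p^H (A - θ I)^{-1} q ≠ 0 and let s be the unique solution of the two-sided Jacobi–Davidson right correction equation (I - q p^H)(A - θ I)(I - q p^H) s = -r_q with constraint p^H s = 0. Then s does not lie in the column space of Q if and only if (A - θ I)^{-1} q ≠ Q P^H (A - θ I)^{-1} q, where Q P^H is the oblique projector onto the column space of Q along the orthogonal complement of the column space of P. -/
open Matrix

/-- If `pᴴ (A - θ I)⁻¹ q ≠ 0` and `s` is the unique solution of the two-sided
Jacobi–Davidson right correction equation, then `s` is not in the column space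
of `Q` iff `(A - θ I)⁻¹ q ≠ Q Pᴴ (A - θ I)⁻¹ q`. -/
theorem two_sided_jd_right_expansion_iff
    {n k : ℕ} (A : Matrix (Fin n) (Fin n) ℂ)
    (Q P : Matrix (Fin n) (Fin k) ℂ)
    (hQP : Qᴴ * P = 1) (hPQ : Pᴴ * Q = 1)
    (q p : Matrix (Fin n) (Fin 1) ℂ)
    (hqQ : ∃ c : Matrix (Fin k) (Fin 1) ℂ, q = Q * c)
    (hpP : ∃ c : Matrix (Fin k) (Fin 1) ℂ, p = P * c)
    (hpq : pᴴ * q = 1)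
    (θ : ℂ) (hθ : θ = (pᴴ * A * q) 0 0)
    (hA : IsUnit (A - θ • (1 : Matrix (Fin n) (Fin n) ℂ)))
    (rq : Matrix (Fin n) (Fin 1) ℂ)
    (hrq : rq = (A - θ • 1) * q)
    (hα : (pᴴ * (A - θ • (1 : Matrix (Fin n) (Fin n) ℂ))⁻¹ * q) 0 0 ≠ 0)
    (s : Matrix (Fin n) (Fin 1) ℂ)
    (hs₁ : pᴴ * s = 0)
    (hs₂ : (1 - q * pᴴ) * (A - θ • 1) * (1 - q * pᴴ) * s = -rq) :
    (¬ ∃ c : Matrix (Fin k) (Fin 1) ℂ, s = Q * c) ↔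
      (A - θ • (1 : Matrix (Fin n) (Fin n) ℂ))⁻¹ * q ≠
        Q * Pᴴ * ((A - θ • (1 : Matrix (Fin n) (Fin n) ℂ))⁻¹ * q) := by
  obtain ⟨cq, hcq⟩ := hqQ
  set B := A - θ • (1 : Matrix (Fin n) (Fin n) ℂ) with hB
  set x := B⁻¹ * q with hx
  have hdet : IsUnit B.det := (Matrix.isUnit_iff_isUnit_det B).mp hA
  have hBinv : B⁻¹ * B = 1 := Matrix.nonsing_inv_mul B hdet
  have h1 : (1 - q * pᴴ) * s = s := by
    rw [Matrix.sub_mul 1 (q * pᴴ) s, Matrix.one_mul, Matrix.mul_assoc, hs₁, Matrix.mul_zero, sub_zero]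
  have h2 : B * s - q * (pᴴ * (B * s)) = -(B * q) := by
    have h := hs₂
    rw [hrq, Matrix.mul_assoc ((1 - q * pᴴ) * B), h1, Matrix.mul_assoc] at h
    rw [← h, Matrix.sub_mul 1 (q * pᴴ) (B * s), Matrix.one_mul, Matrix.mul_assoc]
  set m : Matrix (Fin 1) (Fin 1) ℂ := pᴴ * (B * s) with hm
  have h3 : B * (s + q) = q * m := by
    rw [Matrix.mul_add]
    have := sub_eq_iff_eq_add.mp h2
    rw [this]; abel
  have h4 : s + q = x * m := by
    have := congrArg (fun y => B⁻¹ * y) h3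
    simpa [← Matrix.mul_assoc, hBinv, hx] using this
  have h5 : s + q = (m 0 0) • x := by
    rw [h4]
    ext i j
    have : j = 0 := Subsingleton.elim j 0
    subst this
    simp [Matrix.mul_apply, Fin.sum_univ_one, mul_comm]
  have hαm : (pᴴ * x) 0 0 * m 0 0 = 1 := by
    have := congrArg (fun y => (pᴴ * y) 0 0) h5
    simp only [Matrix.mul_add, Matrix.add_apply, hs₁, hpq, Matrix.mul_smul,
      Matrix.smul_apply, smul_eq_mul] at this
    simpa [mul_comm] using this.symm
  have hm0 : m 0 0 ≠ 0 := by
    intro h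
    rw [h, mul_zero] at hαm
    exact one_ne_zero hαm.symm
  have key : (∃ c : Matrix (Fin k) (Fin 1) ℂ, s = Q * c) ↔
      (∃ c : Matrix (Fin k) (Fin 1) ℂ, x = Q * c) := by
    constructor
    · rintro ⟨c, hc⟩
      refine ⟨(m 0 0)⁻¹ • (c + cq), ?_⟩
      have : (m 0 0) • x = Q * (c + cq) := by
        rw [← h5, hc, hcq, Matrix.mul_add]
      calc x = (m 0 0)⁻¹ • ((m 0 0) • x) := by
              rw [smul_smul, inv_mul_cancel₀ hm0, one_smul]
        _ = Q * ((m 0 0)⁻¹ • (c + cq)) := by rw [this, Matrix.mul_smul]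
    · rintro ⟨c, hc⟩
      refine ⟨(m 0 0) • c - cq, ?_⟩
      have : s = (m 0 0) • x - q := by rw [← h5]; abel
      rw [this, hc, hcq, Matrix.mul_sub, Matrix.mul_smul]
  have key2 : (∃ c : Matrix (Fin k) (Fin 1) ℂ, x = Q * c) ↔
      x = Q * Pᴴ * x := by
    constructor
    · rintro ⟨c, hc⟩
      rw [hc, Matrix.mul_assoc, ← Matrix.mul_assoc Pᴴ, hPQ, Matrix.one_mul]
    · intro h
      exact ⟨Pᴴ * x, by conv_lhs => rw [h, Matrix.mul_assoc]⟩
  rw [not_iff_not.mpr (key.trans key2)]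
end

section
/- Suppose p^H (A - θ I)^{-1} q ≠ 0 and let t be the unique solution of the two-sided Jacobi–Davidson left correction equation (I - p q^H)(A^H - θ̄ I)(I - p q^H) t = -r_p with constraint q^H t = 0. Then t does not lie in the column space of P if and only if (A^H - θ̄ I)^{-1} p ≠ P Q^H (A^H - θ̄ I)^{-1} p, where P Q^H is the oblique projector onto the column space of P along the orthogonal complement of the column space of Q. -/
open Matrix

lemma mul_one_by_one_aux {n : ℕ} (p : Matrix (Fin n) (Fin 1) ℂ)
    (M : Matrix (Fin 1) (Fin 1) ℂ) : p * M = (M 0 0) • p := by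
  ext i j
  have hj : j = 0 := Subsingleton.elim j 0
  subst hj
  simp [Matrix.mul_apply, Fin.sum_univ_one, mul_comm]

/-- If `pᴴ (A - θ I)⁻¹ q ≠ 0` and `t` is the unique solution of the two-sided
Jacobi–Davidson left correction equation, then `t` is not in the column space
of `P` iff `(Aᴴ - θ̄ I)⁻¹ p ≠ P Qᴴ (Aᴴ - θ̄ I)⁻¹ p`. -/
theorem two_sided_jd_left_expansion_iff
    {n k : ℕ} (A : Matrix (Fin n) (Fin n) ℂ)
    (Q P : Matrix (Fin n) (Fin k) ℂ)
    (hQP : Qᴴ * P = 1) (hPQ : Pᴴ * Q = 1)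
    (q p : Matrix (Fin n) (Fin 1) ℂ)
    (hqQ : ∃ c : Matrix (Fin k) (Fin 1) ℂ, q = Q * c)
    (hpP : ∃ c : Matrix (Fin k) (Fin 1) ℂ, p = P * c)
    (hpq : pᴴ * q = 1)
    (θ : ℂ) (hθ : θ = (pᴴ * A * q) 0 0)
    (hA : IsUnit (A - θ • (1 : Matrix (Fin n) (Fin n) ℂ)))
    (rp : Matrix (Fin n) (Fin 1) ℂ)
    (hrp : rp = (Aᴴ - (starRingEnd ℂ θ) • 1) * p)
    (hα : (pᴴ * (A - θ • (1 : Matrix (Fin n) (Fin n) ℂ))⁻¹ * q) 0 0 ≠ 0)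
    (t : Matrix (Fin n) (Fin 1) ℂ)
    (ht₁ : qᴴ * t = 0)
    (ht₂ : (1 - p * qᴴ) * (Aᴴ - (starRingEnd ℂ θ) • 1) * (1 - p * qᴴ) * t = -rp) :
    (¬ ∃ c : Matrix (Fin k) (Fin 1) ℂ, t = P * c) ↔
      (Aᴴ - (starRingEnd ℂ θ) • (1 : Matrix (Fin n) (Fin n) ℂ))⁻¹ * p ≠
        P * Qᴴ * ((Aᴴ - (starRingEnd ℂ θ) • (1 : Matrix (Fin n) (Fin n) ℂ))⁻¹ * p) := by
  set B : Matrix (Fin n) (Fin n) ℂ := Aᴴ - (starRingEnd ℂ θ) • 1 with hBdef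
  have hBct : B = (A - θ • (1 : Matrix (Fin n) (Fin n) ℂ))ᴴ := by
    simp [hBdef, conjTranspose_sub, conjTranspose_smul]
  have hBunit : IsUnit B := by
    rw [hBct, Matrix.isUnit_iff_isUnit_det, Matrix.det_conjTranspose]
    exact ((Matrix.isUnit_iff_isUnit_det _).mp hA).star
  have hBdet : IsUnit B.det := (Matrix.isUnit_iff_isUnit_det B).mp hBunit
  have hBinv : B⁻¹ * B = 1 := Matrix.nonsing_inv_mul B hBdet
  -- (1 - pqᴴ) t = t
  have h1 : (1 - p * qᴴ) * t = t := by
    rw [Matrix.sub_mul, Matrix.one_mul, Matrix.mul_assoc, ht₁, Matrix.mul_zero, sub_zero]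
  have h2 : (1 - p * qᴴ) * (B * t) = -(B * p) := by
    have := ht₂
    rw [Matrix.mul_assoc ((1 - p * qᴴ) * B) (1 - p * qᴴ) t, h1, hrp,
      Matrix.mul_assoc] at this
    exact this
  set ε : ℂ := (qᴴ * (B * t)) 0 0 with hεdef
  have h3 : B * t = ε • p - B * p := by
    have hexp : (1 - p * qᴴ) * (B * t) = B * t - ε • p := by
      rw [Matrix.sub_mul, Matrix.one_mul, Matrix.mul_assoc, mul_one_by_one_aux]
    rw [hexp] at h2
    have h2' := sub_eq_iff_eq_add.mp h2
    rw [h2']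
    abel
  have ht : t = ε • (B⁻¹ * p) - p := by
    have := congrArg (fun M => B⁻¹ * M) h3
    simpa [← Matrix.mul_assoc, hBinv, Matrix.one_mul, Matrix.mul_sub,
      Matrix.mul_smul] using this
  have hqp : qᴴ * p = 1 := by
    have := congrArg conjTranspose hpq
    simpa [conjTranspose_mul] using this
  have hε : ε ≠ 0 := by
    intro h0
    have h4 : qᴴ * t = -(qᴴ * p) := by
      rw [ht, Matrix.mul_sub, Matrix.mul_smul, h0, zero_smul, zero_sub]
    rw [ht₁, hqp] at h4
    have := congrFun (congrFun h4 0) 0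
    simp at this
  rw [ne_eq, not_iff_not]
  obtain ⟨cp, hcp⟩ := hpP
  constructor
  · rintro ⟨c, hc⟩
    have h5 : ε • (B⁻¹ * p) = P * (c + cp) := by
      rw [Matrix.mul_add, ← hc, ← hcp, ht]
      abel
    have h6 : B⁻¹ * p = P * (ε⁻¹ • (c + cp)) := by
      rw [Matrix.mul_smul, ← h5, smul_smul, inv_mul_cancel₀ hε, one_smul]
    rw [h6, Matrix.mul_assoc, ← Matrix.mul_assoc Qᴴ, hQP, Matrix.one_mul]
  · intro heq
    refine ⟨ε • (Qᴴ * (B⁻¹ * p)) - cp, ?_⟩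
    rw [ht, Matrix.mul_sub, Matrix.mul_smul, ← hcp, ← Matrix.mul_assoc, ← heq]
end
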